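/- arXiv:1512.03795 — 4 statements merged into one kernel-verified Lean document; each statement's English description precedes it below -/
import Mathlib

section
/- Let a : ℕ → [0,∞) satisfy ⌊n/m⌋² · a(m) ≤ a(n) for all natural numbers 1 ≤ m ≤ n, and suppose there is C > 0 with a(n) ≤ C·n² for all n ≥ 1. Then the sequence n ↦ a(n)/n² converges as n → ∞, and its limit equals sup_{m ≥ 1} a(m)/m². -/
open Filter

/-- if `a : ℕ → [0,∞)` satisfies `⌊n/m⌋² a(m) ≤ a(n)` for `1 ≤ m ≤ n` and
`a(n) ≤ C n²` for `n ≥ 1`, then `a(n)/n²` converges, and its limit is `sup_{m ≥ 1} a(m)/m²`. -/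
theorem subadditive_limit (a : ℕ → ℝ) (ha0 : ∀ n, 0 ≤ a n)
    (hsub : ∀ m n : ℕ, 1 ≤ m → m ≤ n → ((n / m : ℕ) : ℝ)^2 * a m ≤ a n)
    (hbd : ∃ C : ℝ, 0 < C ∧ ∀ n : ℕ, 1 ≤ n → a n ≤ C * (n : ℝ)^2) :
    Tendsto (fun n : ℕ => a n / (n : ℝ)^2) atTop
      (nhds (sSup {x : ℝ | ∃ m : ℕ, 1 ≤ m ∧ x = a m / (m : ℝ)^2})) := by
  obtain ⟨C, hC, hbdC⟩ := hbd
  set s : Set ℝ := {x : ℝ | ∃ m : ℕ, 1 ≤ m ∧ x = a m / (m : ℝ)^2} with hs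
  have hne : s.Nonempty := ⟨a 1 / (1 : ℝ)^2, 1, le_refl 1, by norm_num⟩
  have hba : BddAbove s := by
    refine ⟨C, fun x hx => ?_⟩
    obtain ⟨m, hm, rfl⟩ := hx
    have hm' : (0:ℝ) < (m:ℝ)^2 := by positivity
    rw [div_le_iff₀ hm']
    exact hbdC m hm
  have hmem : ∀ n : ℕ, 1 ≤ n → a n / (n:ℝ)^2 ≤ sSup s := fun n hn =>
    le_csSup hba ⟨n, hn, rfl⟩
  rw [tendsto_order]
  constructor
  · intro x hx
    obtain ⟨y, hy, hxy⟩ := exists_lt_of_lt_csSup hne hx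
    obtain ⟨m, hm, rfl⟩ := hy
    set c : ℝ := a m / (m:ℝ)^2 with hc
    have hm0 : (0:ℝ) < m := by exact_mod_cast hm
    have hc0 : 0 ≤ c := div_nonneg (ha0 m) (by positivity)
    -- tendsto of the lower bound sequence
    have hg : Tendsto (fun n : ℕ => c * (1 - (m:ℝ)/n)^2) atTop (nhds c) := by
      have h1 : Tendsto (fun n : ℕ => (m:ℝ)/n) atTop (nhds 0) :=
        tendsto_const_div_atTop_nhds_zero_nat (m:ℝ)
      have h2 : Tendsto (fun n : ℕ => c * (1 - (m:ℝ)/n)^2) atTop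
          (nhds (c * (1 - 0)^2)) := (((tendsto_const_nhds.sub h1).pow 2).const_mul c)
      simpa using h2
    have hev : ∀ᶠ n : ℕ in atTop, x < c * (1 - (m:ℝ)/n)^2 :=
      hg.eventually (eventually_gt_nhds hxy)
    filter_upwards [hev, eventually_ge_atTop m, eventually_ge_atTop 1] with n hn1 hnm hn2
    have hn0 : (0:ℝ) < n := by exact_mod_cast hn2
    -- a n ≥ ((n:ℝ)/m - 1)^2 * a m
    have hfl : (n:ℝ)/m - 1 ≤ ((n / m : ℕ) : ℝ) := by
      have h : n < (n / m + 1) * m := by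
        have h1 := Nat.div_add_mod n m
        have h2 := Nat.mod_lt n (show 0 < m from hm)
        nlinarith
      have h' : (n:ℝ) < (((n / m : ℕ) : ℝ) + 1) * m := by exact_mod_cast h
      rw [div_sub_one (ne_of_gt hm0), div_le_iff₀ hm0]
      nlinarith
    have hnm' : (0:ℝ) ≤ (n:ℝ)/m - 1 := by
      have : (m:ℝ) ≤ n := by exact_mod_cast hnm
      rw [sub_nonneg, le_div_iff₀ hm0]; linarith
    have hsq : ((n:ℝ)/m - 1)^2 * a m ≤ ((n / m : ℕ) : ℝ)^2 * a m := by
      have := pow_le_pow_left₀ hnm' hfl 2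
      exact mul_le_mul_of_nonneg_right this (ha0 m)
    have hA : ((n:ℝ)/m - 1)^2 * a m ≤ a n := hsq.trans (hsub m n hm hnm)
    have key : c * (1 - (m:ℝ)/n)^2 = ((n:ℝ)/m - 1)^2 * a m / (n:ℝ)^2 := by
      rw [hc]
      field_simp
    calc x < c * (1 - (m:ℝ)/n)^2 := hn1
      _ = ((n:ℝ)/m - 1)^2 * a m / (n:ℝ)^2 := key
      _ ≤ a n / (n:ℝ)^2 := by
          exact div_le_div_of_nonneg_right hA (by positivity) |>.trans_eq rfl
  · intro x hx
    filter_upwards [eventually_ge_atTop 1] with n hn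
    exact lt_of_le_of_lt (hmem n hn) hx
end

section
/- Let δ > 0, λ > 0, p ≥ 1 and A ∈ ℝ^{3×3}. With C¹_δ and C²_δ the open pyramids with common base square (−δ/2,δ/2)² × {0} and apexes (0,0,δ/2) and (0,0,δ) respectively, ℝ³₊ = {x ∈ ℝ³ : x₃ > 0}, and m_{δ,p,A} := inf { ∫_{C²_δ ∩ ℝ³₊} ‖Dv(x)‖^p dx : v : ℝ³₊ → ℝ³ locally Lipschitz, v = 0 on C¹_δ ∩ ℝ³₊, v(x) = Ax on ℝ³₊ ∖ C²_δ }, one has the scaling identity m_{δ,p,λA} = δ³ λ^p m_{1,p,A} (as an identity in [0,∞]). -/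
open MeasureTheory Filter Set Matrix
open scoped ENNReal NNReal

noncomputable section

/-- 3×3 real matrices. -/
abbrev Mat3 := Matrix (Fin 3) (Fin 3) ℝ

/-- Euclidean 3-space. -/
abbrev E3 := EuclideanSpace ℝ (Fin 3)

/-- The matrix of a continuous linear map `E3 →L[ℝ] E3` in the standard basis. -/
def matOf (f : E3 →L[ℝ] E3) : Mat3 := fun i j => f (EuclideanSpace.single j 1) i

/-- Frobenius norm of a 3×3 matrix. -/
def frob (M : Mat3) : ℝ := Real.sqrt (∑ i, ∑ j, (M i j)^2)

/-- The special orthogonal group SO(3), as a set of matrices. -/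
def SO3 : Set Mat3 := {Q | Q * Q.transpose = 1 ∧ Q.det = 1}

/-- Frobenius distance from `F` to the well `α·SO(3)`. -/
def distSO (α : ℝ) (F : Mat3) : ℝ := sInf {d : ℝ | ∃ Q ∈ SO3, d = frob (F - α • Q)}

/-- Matrix-vector multiplication, as a map on Euclidean space. -/
def mulVecE (A : Mat3) (x : E3) : E3 := WithLp.toLp 2 (A.mulVec x)

/-- `v` is locally Lipschitz on the (open) set `s`. -/
def LocLipOn (s : Set E3) (v : E3 → E3) : Prop :=
  ∀ x ∈ s, ∃ K : ℝ≥0, ∃ t ∈ nhds x, t ⊆ s ∧ LipschitzOnWith K v t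

/-- The open upper half-space `ℝ³₊ = {x₃ > 0}`. -/
def H3 : Set E3 := {x | 0 < x 2}

/-- The open pyramid `C¹_δ` with base square `(−δ/2,δ/2)² × {0}` and apex `(0,0,δ/2)`. -/
def Pyr1 (δ : ℝ) : Set E3 :=
  {x | 0 < x 2 ∧ x 2 < δ/2 ∧ |x 0| < δ/2 - x 2 ∧ |x 1| < δ/2 - x 2}

/-- The open pyramid `C²_δ` with base square `(−δ/2,δ/2)² × {0}` and apex `(0,0,δ)`. -/
def Pyr2 (δ : ℝ) : Set E3 :=
  {x | 0 < x 2 ∧ x 2 < δ ∧ |x 0| < (δ - x 2)/2 ∧ |x 1| < (δ - x 2)/2}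

/-- Admissible maps for the double-pyramid problem: locally Lipschitz on `ℝ³₊`,
vanishing on `C¹_δ ∩ ℝ³₊`, and equal to `x ↦ Ax` on `ℝ³₊ ∖ C²_δ`. -/
def PyrAdm (δ : ℝ) (A : Mat3) (v : E3 → E3) : Prop :=
  LocLipOn H3 v ∧ (∀ x ∈ Pyr1 δ ∩ H3, v x = 0) ∧ (∀ x ∈ H3 \ Pyr2 δ, v x = mulVecE A x)

/-- The double-pyramid minimum value `m_{δ,p,A}`, as an element of `[0,∞]`. -/
def mPyr (δ p : ℝ) (A : Mat3) : ℝ≥0∞ :=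
  sInf {e : ℝ≥0∞ | ∃ v : E3 → E3, PyrAdm δ A v ∧
    e = ∫⁻ x in Pyr2 δ ∩ H3, ENNReal.ofReal (frob (matOf (fderiv ℝ v x)) ^ p)}

/-! ### Auxiliary lemmas for the scaling argument -/

lemma E3_smul_apply (c : ℝ) (x : E3) (i : Fin 3) : (c • x) i = c * x i := rfl

lemma frob_nonneg (M : Mat3) : 0 ≤ frob M := Real.sqrt_nonneg _

lemma frob_smul (c : ℝ) (M : Mat3) : frob (c • M) = |c| * frob M := by
  unfold frob
  rw [← Real.sqrt_sq_eq_abs, ← Real.sqrt_mul (sq_nonneg c)]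
  congr 1
  simp [Matrix.smul_apply, smul_eq_mul, mul_pow, Finset.mul_sum]

lemma matOf_smul (c : ℝ) (f : E3 →L[ℝ] E3) : matOf (c • f) = c • matOf f := by
  funext i j
  simp [matOf, E3_smul_apply, Matrix.smul_apply]

lemma mem_H3_smul {s : ℝ} (hs : 0 < s) {x : E3} : s⁻¹ • x ∈ H3 ↔ x ∈ H3 := by
  simp only [H3, Set.mem_setOf_eq, E3_smul_apply]
  constructor
  · intro h; nlinarith [mul_pos hs h, mul_inv_cancel₀ hs.ne']
  · intro h; positivity

lemma mem_Pyr1_smul {s δ : ℝ} (hs : 0 < s) (x : E3) :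
    x ∈ Pyr1 (s * δ) ↔ s⁻¹ • x ∈ Pyr1 δ := by
  have h0 : (0:ℝ) < s⁻¹ := inv_pos.2 hs
  have hc : s * s⁻¹ = 1 := mul_inv_cancel₀ hs.ne'
  simp only [Pyr1, Set.mem_setOf_eq, E3_smul_apply, abs_mul, abs_of_pos h0]
  constructor
  · rintro ⟨h1, h2, h3, h4⟩
    refine ⟨by positivity, ?_, ?_, ?_⟩ <;> nlinarith [mul_lt_mul_of_pos_left h2 h0,
      mul_lt_mul_of_pos_left h3 h0, mul_lt_mul_of_pos_left h4 h0]
  · rintro ⟨h1, h2, h3, h4⟩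
    refine ⟨by nlinarith, ?_, ?_, ?_⟩ <;> nlinarith [mul_lt_mul_of_pos_left h2 hs,
      mul_lt_mul_of_pos_left h3 hs, mul_lt_mul_of_pos_left h4 hs]

lemma mem_Pyr2_smul {s δ : ℝ} (hs : 0 < s) (x : E3) :
    x ∈ Pyr2 (s * δ) ↔ s⁻¹ • x ∈ Pyr2 δ := by
  have h0 : (0:ℝ) < s⁻¹ := inv_pos.2 hs
  have hc : s * s⁻¹ = 1 := mul_inv_cancel₀ hs.ne'
  simp only [Pyr2, Set.mem_setOf_eq, E3_smul_apply, abs_mul, abs_of_pos h0]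
  constructor
  · rintro ⟨h1, h2, h3, h4⟩
    refine ⟨by positivity, ?_, ?_, ?_⟩ <;> nlinarith [mul_lt_mul_of_pos_left h2 h0,
      mul_lt_mul_of_pos_left h3 h0, mul_lt_mul_of_pos_left h4 h0]
  · rintro ⟨h1, h2, h3, h4⟩
    refine ⟨by nlinarith, ?_, ?_, ?_⟩ <;> nlinarith [mul_lt_mul_of_pos_left h2 hs,
      mul_lt_mul_of_pos_left h3 hs, mul_lt_mul_of_pos_left h4 hs]

lemma smul_smul_cancel {s : ℝ} (hs : s ≠ 0) (x : E3) : s • s⁻¹ • x = x := by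
  rw [smul_smul, mul_inv_cancel₀ hs, one_smul]

lemma fderiv_scale (s μ : ℝ) (hs : s ≠ 0) (hμ : μ ≠ 0) (v : E3 → E3) (x : E3) :
    fderiv ℝ (fun y => (s * μ) • v (s⁻¹ • y)) x = μ • fderiv ℝ v (s⁻¹ • x) := by
  have hsμ : s * μ ≠ 0 := mul_ne_zero hs hμ
  set L : E3 →L[ℝ] E3 := s⁻¹ • ContinuousLinearMap.id ℝ E3 with hL
  by_cases hd : DifferentiableAt ℝ v (s⁻¹ • x)
  · have hdL : DifferentiableAt ℝ (fun y : E3 => v (s⁻¹ • y)) x := by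
      exact hd.comp x L.differentiableAt
    have h1 : fderiv ℝ (fun y => (s * μ) • v (s⁻¹ • y)) x
        = (s * μ) • fderiv ℝ (fun y : E3 => v (s⁻¹ • y)) x := fderiv_fun_const_smul hdL _
    have h2 : fderiv ℝ (fun y : E3 => v (s⁻¹ • y)) x
        = (fderiv ℝ v (s⁻¹ • x)).comp L := by
      have h := fderiv_comp (𝕜 := ℝ) x (g := v) (f := ⇑L) hd L.differentiableAt
      rw [L.fderiv] at h
      exact h
    rw [h1, h2, hL, ContinuousLinearMap.comp_smul, ContinuousLinearMap.comp_id, smul_smul]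
    congr 1
    rw [mul_comm s μ, mul_assoc, mul_inv_cancel₀ hs, mul_one]
  · have hw : ¬ DifferentiableAt ℝ (fun y => (s * μ) • v (s⁻¹ • y)) x := by
      intro h
      apply hd
      have h' : DifferentiableAt ℝ (fun z : E3 => (s * μ)⁻¹ • (s * μ) • v (s⁻¹ • s • z))
          (s⁻¹ • x) := by
        have hin : DifferentiableAt ℝ (fun z : E3 => s • z) (s⁻¹ • x) :=
          (differentiable_id.const_smul s).differentiableAt
        have hcomp : DifferentiableAt ℝ ((fun y => (s * μ) • v (s⁻¹ • y)) ∘ (fun z : E3 => s • z))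
            (s⁻¹ • x) := by
          apply DifferentiableAt.comp
          · rw [smul_smul_cancel hs]; exact h
          · exact hin
        exact hcomp.fun_const_smul _
      have heq : (fun z : E3 => (s * μ)⁻¹ • (s * μ) • v (s⁻¹ • s • z)) = v := by
        funext z
        rw [smul_smul, inv_mul_cancel₀ hsμ, one_smul, smul_smul, inv_mul_cancel₀ hs, one_smul]
      rwa [heq] at h'
    rw [fderiv_zero_of_not_differentiableAt hw, fderiv_zero_of_not_differentiableAt hd]
    exact (smul_zero (A := E3 →L[ℝ] E3) μ).symm

lemma measurable_frob_matOf : Measurable (fun f : E3 →L[ℝ] E3 => frob (matOf f)) := by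
  unfold frob matOf
  apply Real.continuous_sqrt.measurable.comp
  apply Finset.measurable_sum
  intro i _
  apply Finset.measurable_sum
  intro j _
  exact (((EuclideanSpace.proj i : E3 →L[ℝ] ℝ)).measurable.comp
    (ContinuousLinearMap.measurable_apply (EuclideanSpace.single j 1))).pow_const 2

lemma measurable_integrand (p : ℝ) (hp : 0 ≤ p) (v : E3 → E3) :
    Measurable (fun x => ENNReal.ofReal (frob (matOf (fderiv ℝ v x)) ^ p)) := by
  apply ENNReal.measurable_ofReal.comp
  exact (Real.continuous_rpow_const hp).measurable.comp
    (measurable_frob_matOf.comp (measurable_fderiv ℝ v))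

lemma measurableSet_Pyr2H (δ : ℝ) : MeasurableSet (Pyr2 δ ∩ H3) := by
  have hcont : ∀ i : Fin 3, Continuous fun x : E3 => x i :=
    fun i => (EuclideanSpace.proj i : E3 →L[ℝ] ℝ).continuous
  have h1 : IsOpen (Pyr2 δ) := by
    simp only [Pyr2, Set.setOf_and]
    exact (isOpen_lt continuous_const (hcont 2)).inter
      ((isOpen_lt (hcont 2) continuous_const).inter
      ((isOpen_lt (hcont 0).abs ((continuous_const.sub (hcont 2)).div_const 2)).inter
      (isOpen_lt (hcont 1).abs ((continuous_const.sub (hcont 2)).div_const 2))))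
  have h2 : IsOpen H3 := isOpen_lt continuous_const (hcont 2)
  exact (h1.inter h2).measurableSet

lemma lintegral_scale (g : E3 → ℝ≥0∞) (hg : Measurable g) {s : ℝ} (hs : 0 < s)
    {S Sδ : Set E3} (hS : MeasurableSet S) (hmem : ∀ x, x ∈ Sδ ↔ s⁻¹ • x ∈ S) :
    ∫⁻ x in Sδ, g (s⁻¹ • x) = ENNReal.ofReal (s ^ 3) * ∫⁻ x in S, g x := by
  have hsd : Sδ = (fun x : E3 => s⁻¹ • x) ⁻¹' S := Set.ext hmem
  have hms : Measurable (fun x : E3 => s⁻¹ • x) := measurable_const_smul _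
  have hSδ : MeasurableSet Sδ := by rw [hsd]; exact hS.preimage hms
  have hmap : Measure.map (fun x : E3 => s⁻¹ • x) (volume : Measure E3)
      = ENNReal.ofReal (s ^ 3) • (volume : Measure E3) := by
    rw [Measure.map_addHaar_smul (volume : Measure E3) (inv_ne_zero hs.ne')]
    congr 1
    rw [finrank_euclideanSpace_fin]
    rw [inv_pow, inv_inv, abs_of_pos (pow_pos hs 3)]
  calc ∫⁻ x in Sδ, g (s⁻¹ • x)
      = ∫⁻ x, Sδ.indicator (fun x => g (s⁻¹ • x)) x := (lintegral_indicator hSδ _).symm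
    _ = ∫⁻ x, S.indicator g (s⁻¹ • x) := by
        congr 1
        funext x
        by_cases hx : x ∈ Sδ
        · rw [Set.indicator_of_mem hx, Set.indicator_of_mem ((hmem x).1 hx)]
        · rw [Set.indicator_of_notMem hx,
            Set.indicator_of_notMem (fun h => hx ((hmem x).2 h))]
    _ = ∫⁻ y, S.indicator g y ∂(Measure.map (fun x : E3 => s⁻¹ • x) volume) :=
        (lintegral_map (hg.indicator hS) hms).symm
    _ = ENNReal.ofReal (s ^ 3) * ∫⁻ y, S.indicator g y := by
        rw [hmap, lintegral_smul_measure, smul_eq_mul]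
    _ = ENNReal.ofReal (s ^ 3) * ∫⁻ x in S, g x := by rw [lintegral_indicator hS]

lemma scale_mulVec {s μ : ℝ} (hs : s ≠ 0) (A : Mat3) (x : E3) :
    (s * μ) • (mulVecE A (s⁻¹ • x)) = mulVecE (μ • A) x := by
  ext i
  simp only [mulVecE, E3_smul_apply, PiLp.toLp_apply, Matrix.mulVec, dotProduct, Matrix.smul_apply, smul_eq_mul,
    Finset.mul_sum]
  apply Finset.sum_congr rfl
  intro j _
  show (s * μ) * (A i j * (s⁻¹ * x j)) = (μ * A i j) * x j
  field_simp

lemma adm_scale {δ₀ s μ : ℝ} (hs : 0 < s) (hμ : 0 < μ) {A : Mat3}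
    {v : E3 → E3} (hv : PyrAdm δ₀ A v) :
    PyrAdm (s * δ₀) (μ • A) (fun x => (s * μ) • v (s⁻¹ • x)) := by
  set L : E3 →L[ℝ] E3 := s⁻¹ • ContinuousLinearMap.id ℝ E3 with hL
  set M : E3 →L[ℝ] E3 := (s * μ) • ContinuousLinearMap.id ℝ E3 with hM
  refine ⟨?_, ?_, ?_⟩
  · intro x hx
    obtain ⟨K, t, ht, htH, hlip⟩ := hv.1 (s⁻¹ • x) ((mem_H3_smul hs).2 hx)
    refine ⟨‖M‖₊ * (K * ‖L‖₊), (fun y : E3 => s⁻¹ • y) ⁻¹' t, ?_, ?_, ?_⟩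
    · exact ContinuousAt.preimage_mem_nhds ((continuous_const_smul s⁻¹).continuousAt) ht
    · intro y hy
      exact (mem_H3_smul hs).1 (htH hy)
    · have hLlip : LipschitzWith ‖L‖₊ (fun y : E3 => s⁻¹ • y) := fun a b => L.lipschitz a b
      have h1 : LipschitzOnWith (K * ‖L‖₊) (v ∘ fun y : E3 => s⁻¹ • y)
          ((fun y : E3 => s⁻¹ • y) ⁻¹' t) :=
        hlip.comp (hLlip.lipschitzOnWith) (fun y hy => hy)
      have h2 : LipschitzWith ‖M‖₊ (fun z : E3 => (s * μ) • z) := fun a b => M.lipschitz a b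
      exact h2.comp_lipschitzOnWith h1
  · rintro x ⟨h1, h2⟩
    show (s * μ) • v (s⁻¹ • x) = 0
    rw [hv.2.1 (s⁻¹ • x) ⟨(mem_Pyr1_smul hs x).1 h1, (mem_H3_smul hs).2 h2⟩, smul_zero]
  · rintro x ⟨h1, h2⟩
    show (s * μ) • v (s⁻¹ • x) = mulVecE (μ • A) x
    rw [hv.2.2 (s⁻¹ • x) ⟨(mem_H3_smul hs).2 h1, fun h => h2 ((mem_Pyr2_smul hs x).2 h)⟩,
      scale_mulVec hs.ne']

lemma energy_scale (p : ℝ) (hp : 0 ≤ p) (δ₀ : ℝ) {s μ : ℝ} (hs : 0 < s) (hμ : 0 < μ)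
    (v : E3 → E3) :
    ∫⁻ x in Pyr2 (s * δ₀) ∩ H3,
        ENNReal.ofReal (frob (matOf (fderiv ℝ (fun y => (s * μ) • v (s⁻¹ • y)) x)) ^ p)
      = ENNReal.ofReal (s ^ 3 * μ ^ p) *
        ∫⁻ x in Pyr2 δ₀ ∩ H3, ENNReal.ofReal (frob (matOf (fderiv ℝ v x)) ^ p) := by
  set g : E3 → ℝ≥0∞ := fun y => ENNReal.ofReal (frob (matOf (fderiv ℝ v y)) ^ p) with hg
  have hgm : Measurable g := measurable_integrand p hp v
  have hmem : ∀ x : E3, x ∈ Pyr2 (s * δ₀) ∩ H3 ↔ s⁻¹ • x ∈ Pyr2 δ₀ ∩ H3 := by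
    intro x
    exact and_congr (mem_Pyr2_smul hs x) (mem_H3_smul hs).symm
  have hpt : ∀ x : E3,
      ENNReal.ofReal (frob (matOf (fderiv ℝ (fun y => (s * μ) • v (s⁻¹ • y)) x)) ^ p)
        = ENNReal.ofReal (μ ^ p) * g (s⁻¹ • x) := by
    intro x
    rw [fderiv_scale s μ hs.ne' hμ.ne' v x, matOf_smul, frob_smul, abs_of_pos hμ,
      Real.mul_rpow hμ.le (frob_nonneg _), ENNReal.ofReal_mul (Real.rpow_nonneg hμ.le p)]
  calc ∫⁻ x in Pyr2 (s * δ₀) ∩ H3,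
        ENNReal.ofReal (frob (matOf (fderiv ℝ (fun y => (s * μ) • v (s⁻¹ • y)) x)) ^ p)
      = ∫⁻ x in Pyr2 (s * δ₀) ∩ H3, ENNReal.ofReal (μ ^ p) * g (s⁻¹ • x) :=
        lintegral_congr hpt
    _ = ENNReal.ofReal (μ ^ p) * ∫⁻ x in Pyr2 (s * δ₀) ∩ H3, g (s⁻¹ • x) :=
        lintegral_const_mul' _ _ ENNReal.ofReal_ne_top
    _ = ENNReal.ofReal (μ ^ p) * (ENNReal.ofReal (s ^ 3) * ∫⁻ x in Pyr2 δ₀ ∩ H3, g x) := by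
        rw [lintegral_scale g hgm hs (measurableSet_Pyr2H δ₀) hmem]
    _ = ENNReal.ofReal (s ^ 3 * μ ^ p) *
        ∫⁻ x in Pyr2 δ₀ ∩ H3, ENNReal.ofReal (frob (matOf (fderiv ℝ v x)) ^ p) := by
        rw [← mul_assoc, ← ENNReal.ofReal_mul (Real.rpow_nonneg hμ.le p), mul_comm (μ ^ p) (s^3)]

lemma mPyr_le (p : ℝ) (hp : 0 ≤ p) {δ₀ s μ : ℝ} (hs : 0 < s) (hμ : 0 < μ) (A : Mat3) :
    mPyr (s * δ₀) p (μ • A) ≤ ENNReal.ofReal (s ^ 3 * μ ^ p) * mPyr δ₀ p A := by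
  set c := ENNReal.ofReal (s ^ 3 * μ ^ p) with hc
  have hpos : (0:ℝ) < s ^ 3 * μ ^ p :=
    mul_pos (pow_pos hs 3) (Real.rpow_pos_of_pos hμ p)
  have hc0 : c ≠ 0 := ne_of_gt (ENNReal.ofReal_pos.2 hpos)
  have hct : c ≠ ⊤ := ENNReal.ofReal_ne_top
  unfold mPyr
  conv_rhs => rw [sInf_eq_iInf]
  rw [ENNReal.mul_iInf_of_ne hc0 hct]
  simp_rw [ENNReal.mul_iInf_of_ne hc0 hct]
  apply le_iInf
  intro e
  apply le_iInf
  rintro ⟨v, hadm, rfl⟩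
  apply sInf_le
  exact ⟨fun x => (s * μ) • v (s⁻¹ • x), adm_scale hs hμ hadm,
    (energy_scale p hp δ₀ hs hμ v).symm⟩

/-- the scaling identity `m_{δ,p,λA} = δ³ λ^p m_{1,p,A}` in `[0,∞]`. -/
theorem pyramid_scaling (δ lam p : ℝ) (hδ : 0 < δ) (hlam : 0 < lam) (hp : 1 ≤ p) (A : Mat3) :
    mPyr δ p (lam • A) = ENNReal.ofReal (δ^3 * lam ^ p) * mPyr 1 p A := by
  have hp0 : (0:ℝ) ≤ p := le_trans zero_le_one hp
  have h1 : mPyr δ p (lam • A) ≤ ENNReal.ofReal (δ ^ 3 * lam ^ p) * mPyr 1 p A := by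
    have h := mPyr_le (δ₀ := 1) p hp0 hδ hlam A
    rwa [mul_one] at h
  have h2 := mPyr_le (δ₀ := δ) p hp0 (inv_pos.2 hδ) (inv_pos.2 hlam) (lam • A)
  rw [inv_mul_cancel₀ hδ.ne', smul_smul, inv_mul_cancel₀ hlam.ne', one_smul] at h2
  have hpos : (0:ℝ) < δ ^ 3 * lam ^ p :=
    mul_pos (pow_pos hδ 3) (Real.rpow_pos_of_pos hlam p)
  have hinv : ENNReal.ofReal (δ⁻¹ ^ 3 * lam⁻¹ ^ p) = (ENNReal.ofReal (δ ^ 3 * lam ^ p))⁻¹ := by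
    rw [← ENNReal.ofReal_inv_of_pos hpos]
    congr 1
    rw [Real.inv_rpow hlam.le, inv_pow, mul_inv]
  rw [hinv] at h2
  set c := ENNReal.ofReal (δ ^ 3 * lam ^ p) with hcdef
  have hc0 : c ≠ 0 := ne_of_gt (ENNReal.ofReal_pos.2 hpos)
  have hct : c ≠ ⊤ := ENNReal.ofReal_ne_top
  refine le_antisymm h1 ?_
  calc c * mPyr 1 p A ≤ c * (c⁻¹ * mPyr δ p (lam • A)) := mul_le_mul_right h2 c
    _ = (c * c⁻¹) * mPyr δ p (lam • A) := (mul_assoc _ _ _).symm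
    _ = mPyr δ p (lam • A) := by rw [ENNReal.mul_inv_cancel hc0 hct, one_mul]
end
end

section
/- Let 1 < p < 2 and A ∈ ℝ^{3×3}. With C¹_1 and C²_1 the open pyramids with common base square (−1/2,1/2)² × {0} and apexes (0,0,1/2) and (0,0,1) respectively, and ℝ³₊ = {x ∈ ℝ³ : x₃ > 0}, there exists a map v : ℝ³₊ → ℝ³ that is locally Lipschitz on ℝ³₊, satisfies v = 0 on C¹_1 ∩ ℝ³₊ and v(x) = Ax on ℝ³₊ ∖ C²_1, and has finite energy ∫_{C²_1 ∩ ℝ³₊} ‖Dv(x)‖^p dx < ∞. -/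
open MeasureTheory Filter Set Matrix
open scoped ENNReal NNReal

noncomputable section

namespace PyrAux

lemma coord_sq_le (x : E3) (i : Fin 3) : (x i)^2 ≤ ‖x‖^2 := by
  rw [EuclideanSpace.norm_eq, Real.sq_sqrt (by positivity)]
  calc (x i)^2 = ‖x i‖^2 := by rw [Real.norm_eq_abs, sq_abs]
  _ ≤ ∑ j, ‖x j‖^2 :=
    Finset.single_le_sum (f := fun j => ‖x j‖^2) (fun j _ => by positivity) (Finset.mem_univ i)

lemma abs_coord_le (x : E3) (i : Fin 3) : |x i| ≤ ‖x‖ := by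
  nlinarith [coord_sq_le x i, sq_abs (x i), abs_nonneg (x i), norm_nonneg x]

lemma abs_coord_sub_le (x y : E3) (i : Fin 3) : |x i - y i| ≤ dist x y := by
  rw [dist_eq_norm]
  exact abs_coord_le (x - y) i
lemma frob_nonneg (M : Mat3) : 0 ≤ frob M := Real.sqrt_nonneg _

lemma frob_le_of_entries {M : Mat3} {c : ℝ} (hc : 0 ≤ c) (h : ∀ i j, |M i j| ≤ c) :
    frob M ≤ 3 * c := by
  have hsum : ∑ i, ∑ j, (M i j)^2 ≤ (3 * c)^2 := by
    have : ∀ i j : Fin 3, (M i j)^2 ≤ c^2 := fun i j => by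
      have := h i j
      nlinarith [sq_abs (M i j), abs_nonneg (M i j)]
    calc ∑ i, ∑ j, (M i j)^2 ≤ ∑ _i : Fin 3, ∑ _j : Fin 3, c^2 :=
      Finset.sum_le_sum fun i _ => Finset.sum_le_sum fun j _ => this i j
    _ = (3*c)^2 := by simp [Fin.sum_univ_three]; ring_nf
  calc frob M ≤ Real.sqrt ((3*c)^2) := Real.sqrt_le_sqrt hsum
  _ = 3 * c := Real.sqrt_sq (by linarith)

lemma frob_matOf_le (f : E3 →L[ℝ] E3) : frob (matOf f) ≤ 3 * ‖f‖ := by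
  refine frob_le_of_entries (norm_nonneg f) fun i j => ?_
  show |(f (EuclideanSpace.single j 1)) i| ≤ ‖f‖
  refine (PyrAux.abs_coord_le _ i).trans ?_
  calc ‖f (EuclideanSpace.single j 1)‖ ≤ ‖f‖ * ‖EuclideanSpace.single j (1:ℝ)‖ := f.le_opNorm _
  _ = ‖f‖ := by rw [EuclideanSpace.norm_single]; simp

lemma matOf_zero : matOf 0 = 0 := by
  ext i j; simp [matOf]

lemma frob_zero : frob 0 = 0 := by simp [frob]

lemma norm_mulVecE_le (A : Mat3) (x : E3) : ‖mulVecE A x‖ ≤ frob A * ‖x‖ := by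
  have hnx : ‖x‖ = Real.sqrt (∑ j, (x j)^2) := by
    rw [EuclideanSpace.norm_eq]; simp_rw [Real.norm_eq_abs, sq_abs]
  have hnv : ‖mulVecE A x‖ = Real.sqrt (∑ i, (A.mulVec x i)^2) := by
    rw [EuclideanSpace.norm_eq]; simp_rw [Real.norm_eq_abs, sq_abs]; rfl
  have key : ∑ i, (A.mulVec x i)^2 ≤ (∑ i, ∑ j, (A i j)^2) * (∑ j, (x j)^2) := by
    calc ∑ i, (A.mulVec x i)^2 ≤ ∑ i, ((∑ j, (A i j)^2) * (∑ j, (x j)^2)) := by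
          refine Finset.sum_le_sum fun i _ => ?_
          have := Finset.sum_mul_sq_le_sq_mul_sq Finset.univ (fun j => A i j) (fun j => x j)
          simpa [Matrix.mulVec, dotProduct] using this
    _ = (∑ i, ∑ j, (A i j)^2) * (∑ j, (x j)^2) := by rw [Finset.sum_mul]
  rw [hnv, hnx, frob]
  calc Real.sqrt (∑ i, (A.mulVec x i)^2)
      ≤ Real.sqrt ((∑ i, ∑ j, (A i j)^2) * (∑ j, (x j)^2)) := Real.sqrt_le_sqrt key
  _ = Real.sqrt (∑ i, ∑ j, (A i j)^2) * Real.sqrt (∑ j, (x j)^2) :=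
      Real.sqrt_mul (by positivity) _

lemma mulVecE_sub (A : Mat3) (x y : E3) : mulVecE A x - mulVecE A y = mulVecE A (x - y) := by
  ext i
  show A.mulVec x i - A.mulVec y i = A.mulVec (x - y) i
  simp [Matrix.mulVec, dotProduct, ← Finset.sum_sub_distrib]
  congr 1; funext j
  ring

def Aclm (A : Mat3) : E3 →L[ℝ] E3 :=
  LinearMap.toContinuousLinearMap
    (((WithLp.linearEquiv 2 ℝ (Fin 3 → ℝ)).symm.toLinearMap.comp A.mulVecLin).comp
      (WithLp.linearEquiv 2 ℝ (Fin 3 → ℝ)).toLinearMap)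

lemma Aclm_apply (A : Mat3) (x : E3) : Aclm A x = mulVecE A x := rfl

lemma matOf_Aclm (A : Mat3) : matOf (Aclm A) = A := by
  ext i j
  show (Aclm A) (EuclideanSpace.single j 1) i = A i j
  rw [Aclm_apply]
  show A.mulVec (EuclideanSpace.single j 1) i = A i j
  simp [Matrix.mulVec, dotProduct, EuclideanSpace.single_apply]

abbrev P1 : Set E3 := Pyr1 1

lemma P1_nonempty : P1.Nonempty := by
  refine ⟨EuclideanSpace.single 2 (1/4 : ℝ), ?_⟩
  simp only [Pyr1, Set.mem_setOf_eq, EuclideanSpace.single_apply]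
  norm_num [show ((0:Fin 3) = 2) = False by decide, show ((1:Fin 3) = 2) = False by decide]

lemma contCoord (i : Fin 3) : Continuous (fun x : E3 => x i) :=
  (continuous_apply i).comp (PiLp.continuous_ofLp 2 (fun _ : Fin 3 => ℝ))

lemma isOpen_Pyr1 : IsOpen (Pyr1 1) := by
  have h0 := contCoord 0
  have h1 := contCoord 1
  have h2 := contCoord 2
  have : Pyr1 1 = ({x : E3 | 0 < x 2} ∩ {x : E3 | x 2 < 1/2}) ∩
      ({x : E3 | |x 0| < 1/2 - x 2} ∩ {x : E3 | |x 1| < 1/2 - x 2}) := by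
    ext x; simp only [Pyr1, Set.mem_setOf_eq, Set.mem_inter_iff]
    constructor
    · rintro ⟨a, b, c, d⟩; exact ⟨⟨a, by linarith⟩, ⟨by linarith [c], by linarith [d]⟩⟩
    · rintro ⟨⟨a, b⟩, c, d⟩
      refine ⟨a, by linarith, by rw [show (1:ℝ)/2 = 1/2 from rfl]; linarith [c], by linarith [d]⟩
  rw [this]
  exact ((isOpen_lt continuous_const h2).inter (isOpen_lt h2 continuous_const)).inter
    ((isOpen_lt h0.abs (continuous_const.sub h2)).inter
      (isOpen_lt h1.abs (continuous_const.sub h2)))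

lemma measurable_coord (i : Fin 3) : Measurable (fun x : E3 => x i) := (contCoord i).measurable

lemma close_bound {x : E3} (ht : 0 < x 2) (h : Metric.infDist x P1 < x 2 / 50) :
    x 2 < 26/50 ∧ |x 0| ≤ 1/2 - x 2 + x 2/25 ∧ |x 1| ≤ 1/2 - x 2 + x 2/25 := by
  obtain ⟨y, hy, hxy⟩ := (Metric.infDist_lt_iff P1_nonempty).mp h
  obtain ⟨hy0, hy1, hy2, hy3⟩ := hy
  have h0 := PyrAux.abs_coord_sub_le x y 0
  have h1 := PyrAux.abs_coord_sub_le x y 1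
  have h2 := PyrAux.abs_coord_sub_le x y 2
  have h0' := abs_lt.mp (lt_of_le_of_lt h0 hxy)
  have h1' := abs_lt.mp (lt_of_le_of_lt h1 hxy)
  have h2' := abs_lt.mp (lt_of_le_of_lt h2 hxy)
  have ha0 := abs_sub_abs_le_abs_sub (x 0) (y 0)
  have ha1 := abs_sub_abs_le_abs_sub (x 1) (y 1)
  have hx0 := lt_of_le_of_lt (le_trans ha0 h0) hxy
  have hx1 := lt_of_le_of_lt (le_trans ha1 h1) hxy
  norm_num at hy1 hy2 hy3 ⊢
  refine ⟨by linarith, by linarith, by linarith⟩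

lemma mem_Pyr2_of_close {x : E3} (ht : 0 < x 2) (h : Metric.infDist x P1 < x 2/50) :
    x ∈ Pyr2 1 := by
  obtain ⟨h2, h0, h1⟩ := close_bound ht h
  refine ⟨ht, by linarith, by linarith, by linarith⟩

lemma not_mem_Pyr1_cases {x : E3} (ht : 0 < x 2) (hx : x ∉ Pyr1 1) :
    1/2 - x 2 ≤ |x 0| ∨ 1/2 - x 2 ≤ |x 1| := by
  by_cases h : x 2 < 1/2
  · rcases le_or_gt (1/2 - x 2) |x 0| with h'|h'
    · exact Or.inl h'
    · rcases le_or_gt (1/2 - x 2) |x 1| with h''|h''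
      · exact Or.inr h''
      · exact absurd (show x ∈ Pyr1 1 from ⟨ht, h, h', h''⟩) hx
  · left; have := abs_nonneg (x 0); linarith [not_lt.mp h]

def phi (x : E3) : ℝ := min 1 (100 * Metric.infDist x P1 / x 2)

def vm (A : Mat3) (x : E3) : E3 := phi x • mulVecE A x

lemma phi_zero {x : E3} (hx : x ∈ Pyr1 1) : phi x = 0 := by
  simp [phi, Metric.infDist_zero_of_mem hx]

lemma phi_one {x : E3} (ht : 0 < x 2) (h : x 2 / 100 ≤ Metric.infDist x P1) : phi x = 1 := by
  refine min_eq_left ?_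
  rw [le_div_iff₀ ht, one_mul]
  linarith

lemma phi_nonneg {x : E3} (ht : 0 < x 2) : 0 ≤ phi x :=
  le_min zero_le_one (div_nonneg (mul_nonneg (by norm_num) Metric.infDist_nonneg) ht.le)

lemma phi_le_one (x : E3) : phi x ≤ 1 := min_le_left _ _

lemma min_sub_min_le (c a b : ℝ) : min c a - min c b ≤ |a - b| := by
  rcases le_total c b with h|h
  · have := min_le_left c a
    rw [min_eq_left h]
    have := abs_nonneg (a - b)
    linarith
  · rw [min_eq_right h]
    have h2 := min_le_right c a
    have h3 := le_abs_self (a - b)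
    linarith

lemma abs_min_sub_min (c a b : ℝ) : |min c a - min c b| ≤ |a - b| := by
  rw [abs_sub_le_iff]
  exact ⟨min_sub_min_le c a b, by rw [abs_sub_comm]; exact min_sub_min_le c b a⟩

def Kr (A : Mat3) (x : E3) : ℝ :=
  100 * (3 * x 2 / 2 + (Metric.infDist x P1 + x 2 / 2)) / (x 2 / 2 * (x 2 / 2))
    * (frob A * (‖x‖ + x 2 / 2)) + frob A

lemma Kr_nonneg (A : Mat3) {x : E3} (ht : 0 < x 2) : 0 ≤ Kr A x := by
  have hd : (0:ℝ) ≤ Metric.infDist x P1 := Metric.infDist_nonneg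
  have hf := frob_nonneg A
  have hn := norm_nonneg x
  have h1 : (0:ℝ) ≤ 100 * (3 * x 2 / 2 + (Metric.infDist x P1 + x 2 / 2)) / (x 2 / 2 * (x 2 / 2)) := by
    apply div_nonneg <;> nlinarith
  have h2 : (0:ℝ) ≤ frob A * (‖x‖ + x 2 / 2) := by nlinarith
  unfold Kr; nlinarith

lemma lip (A : Mat3) {x₀ : E3} (ht : 0 < x₀ 2) :
    LipschitzOnWith (Real.toNNReal (Kr A x₀)) (vm A) (Metric.ball x₀ (x₀ 2 / 2)) := by
  rw [lipschitzOnWith_iff_dist_le_mul]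
  intro a ha b hb
  have ht2 : 0 < x₀ 2 / 2 := by linarith
  have hrad : ∀ z ∈ Metric.ball x₀ (x₀ 2 / 2), x₀ 2 / 2 < z 2 ∧ z 2 < 3 * x₀ 2 / 2 ∧
      Metric.infDist z P1 ≤ Metric.infDist x₀ P1 + x₀ 2 / 2 ∧ ‖z‖ ≤ ‖x₀‖ + x₀ 2 / 2 := by
    intro z hz
    have hdz : dist z x₀ < x₀ 2 / 2 := Metric.mem_ball.mp hz
    have h2 := abs_lt.mp (lt_of_le_of_lt (PyrAux.abs_coord_sub_le z x₀ 2) hdz)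
    refine ⟨by linarith [h2.1], by linarith [h2.2], ?_, ?_⟩
    · exact le_trans (Metric.infDist_le_infDist_add_dist (x := z) (y := x₀)) (by linarith)
    · have : ‖z‖ ≤ ‖x₀‖ + ‖z - x₀‖ := norm_le_insert' z x₀
      rw [← dist_eq_norm] at this
      linarith
  obtain ⟨ha2, ha2', had, han⟩ := hrad a ha
  obtain ⟨hb2, hb2', hbd, hbn⟩ := hrad b hb
  have ha2p : (0:ℝ) < a 2 := lt_trans ht2 ha2
  have hb2p : (0:ℝ) < b 2 := lt_trans ht2 hb2
  have hdan : (0:ℝ) ≤ Metric.infDist a P1 := Metric.infDist_nonneg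
  have hdbn : (0:ℝ) ≤ Metric.infDist b P1 := Metric.infDist_nonneg
  have hd0 : (0:ℝ) ≤ Metric.infDist x₀ P1 := Metric.infDist_nonneg
  have hfA := frob_nonneg A
  -- splitting
  have hsplit : vm A a - vm A b
      = (phi a - phi b) • mulVecE A a + phi b • (mulVecE A a - mulVecE A b) := by
    simp only [vm, sub_smul, smul_sub]; abel
  rw [dist_eq_norm, hsplit]
  -- bound on phi difference
  have hphi : |phi a - phi b| ≤
      100 * (3 * x₀ 2 / 2 + (Metric.infDist x₀ P1 + x₀ 2 / 2)) / (x₀ 2 / 2 * (x₀ 2 / 2))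
        * dist a b := by
    refine le_trans (abs_min_sub_min 1 _ _) ?_
    have key : 100 * Metric.infDist a P1 / a 2 - 100 * Metric.infDist b P1 / b 2
        = 100 * ((Metric.infDist a P1 - Metric.infDist b P1) * b 2
            + Metric.infDist b P1 * (b 2 - a 2)) / (a 2 * b 2) := by
      field_simp; ring
    rw [key, abs_div]
    have hlipd : |Metric.infDist a P1 - Metric.infDist b P1| ≤ dist a b := by
      have := (Metric.lipschitz_infDist_pt P1).dist_le_mul a b
      rwa [Real.dist_eq, NNReal.coe_one, one_mul] at this
    have hba : |b 2 - a 2| ≤ dist a b := by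
      have := PyrAux.abs_coord_sub_le b a 2
      rwa [dist_comm] at this
    have hnum : |100 * ((Metric.infDist a P1 - Metric.infDist b P1) * b 2
        + Metric.infDist b P1 * (b 2 - a 2))|
        ≤ 100 * ((3 * x₀ 2 / 2 + (Metric.infDist x₀ P1 + x₀ 2 / 2)) * dist a b) := by
      rw [abs_mul]
      have habs : |(Metric.infDist a P1 - Metric.infDist b P1) * b 2
          + Metric.infDist b P1 * (b 2 - a 2)|
          ≤ dist a b * (3 * x₀ 2 / 2) + (Metric.infDist x₀ P1 + x₀ 2 / 2) * dist a b := by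
        refine le_trans (abs_add_le _ _) ?_
        rw [abs_mul, abs_mul, abs_of_pos hb2p, abs_of_nonneg hdbn]
        have t1 : |Metric.infDist a P1 - Metric.infDist b P1| * b 2 ≤ dist a b * (3 * x₀ 2 / 2) :=
          mul_le_mul hlipd (by linarith) hb2p.le dist_nonneg
        have t2 : Metric.infDist b P1 * |b 2 - a 2|
            ≤ (Metric.infDist x₀ P1 + x₀ 2 / 2) * dist a b :=
          mul_le_mul hbd hba (abs_nonneg _) (by linarith)
        linarith
      rw [abs_of_nonneg (by norm_num : (0:ℝ) ≤ (100:ℝ))]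
      nlinarith [abs_nonneg ((Metric.infDist a P1 - Metric.infDist b P1) * b 2
          + Metric.infDist b P1 * (b 2 - a 2))]
    have hden : x₀ 2 / 2 * (x₀ 2 / 2) ≤ |a 2 * b 2| := by
      rw [abs_of_pos (mul_pos ha2p hb2p)]
      nlinarith
    have hddpos : (0:ℝ) < x₀ 2 / 2 * (x₀ 2 / 2) := by positivity
    have := div_le_div₀ (by positivity) hnum hddpos hden
    refine le_trans this (le_of_eq ?_)
    field_simp
  -- assemble
  have h1 : ‖(phi a - phi b) • mulVecE A a‖
      ≤ (100 * (3 * x₀ 2 / 2 + (Metric.infDist x₀ P1 + x₀ 2 / 2)) / (x₀ 2 / 2 * (x₀ 2 / 2))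
        * dist a b) * (frob A * (‖x₀‖ + x₀ 2 / 2)) := by
    rw [norm_smul, Real.norm_eq_abs]
    have hAa : ‖mulVecE A a‖ ≤ frob A * (‖x₀‖ + x₀ 2 / 2) :=
      le_trans (norm_mulVecE_le A a) (mul_le_mul_of_nonneg_left han hfA)
    exact mul_le_mul hphi hAa (norm_nonneg _) (by positivity)
  have h2 : ‖phi b • (mulVecE A a - mulVecE A b)‖ ≤ frob A * dist a b := by
    rw [norm_smul, Real.norm_eq_abs, mulVecE_sub, abs_of_nonneg (phi_nonneg hb2p)]
    calc phi b * ‖mulVecE A (a - b)‖ ≤ 1 * ‖mulVecE A (a - b)‖ :=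
        mul_le_mul_of_nonneg_right (phi_le_one b) (norm_nonneg _)
    _ = ‖mulVecE A (a - b)‖ := one_mul _
    _ ≤ frob A * ‖a - b‖ := norm_mulVecE_le A (a - b)
    _ = frob A * dist a b := by rw [dist_eq_norm]
  calc ‖(phi a - phi b) • mulVecE A a + phi b • (mulVecE A a - mulVecE A b)‖
      ≤ ‖(phi a - phi b) • mulVecE A a‖ + ‖phi b • (mulVecE A a - mulVecE A b)‖ := norm_add_le _ _
  _ ≤ (100 * (3 * x₀ 2 / 2 + (Metric.infDist x₀ P1 + x₀ 2 / 2)) / (x₀ 2 / 2 * (x₀ 2 / 2))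
        * dist a b) * (frob A * (‖x₀‖ + x₀ 2 / 2)) + frob A * dist a b := add_le_add h1 h2
  _ = Kr A x₀ * dist a b := by unfold Kr; ring
  _ ≤ (Real.toNNReal (Kr A x₀) : ℝ) * dist a b :=
      mul_le_mul_of_nonneg_right (Real.le_coe_toNNReal _) dist_nonneg

lemma norm_fderiv_vm_le (A : Mat3) {x : E3} (ht : 0 < x 2) :
    ‖fderiv ℝ (vm A) x‖ ≤ Kr A x := by
  have h := norm_fderiv_le_of_lipschitzOn ℝ
    (Metric.ball_mem_nhds x (by linarith : (0:ℝ) < x 2 / 2)) (lip A ht)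
  rwa [Real.coe_toNNReal _ (Kr_nonneg A ht)] at h

lemma bad_bound (A : Mat3) {x : E3} (hx2 : 0 < x 2) (hx2' : x 2 ≤ 1)
    (hd : Metric.infDist x P1 ≤ x 2 / 100) (hn : ‖x‖ ≤ 2) :
    frob (matOf (fderiv ℝ (vm A) x)) ≤ (9003 * (frob A + 1)) / x 2 := by
  have h1 := frob_matOf_le (fderiv ℝ (vm A) x)
  have h2 := norm_fderiv_vm_le A hx2
  have hF := frob_nonneg A
  have hdn : (0:ℝ) ≤ Metric.infDist x P1 := Metric.infDist_nonneg
  have h3 : Kr A x ≤ 3001 * (frob A + 1) / x 2 := by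
    rw [le_div_iff₀ hx2]
    have hL : 100 * (3 * x 2 / 2 + (Metric.infDist x P1 + x 2 / 2)) / (x 2 / 2 * (x 2 / 2))
        ≤ 1200 / x 2 := by
      rw [div_le_div_iff₀ (by positivity) hx2]
      nlinarith
    have hM : frob A * (‖x‖ + x 2 / 2) ≤ frob A * (5/2) :=
      mul_le_mul_of_nonneg_left (by linarith) hF
    have hMn : (0:ℝ) ≤ frob A * (‖x‖ + x 2 / 2) := by positivity
    have hstep : 100 * (3 * x 2 / 2 + (Metric.infDist x P1 + x 2 / 2)) / (x 2 / 2 * (x 2 / 2))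
        * (frob A * (‖x‖ + x 2 / 2)) ≤ (1200 / x 2) * (frob A * (5/2)) :=
      mul_le_mul hL hM hMn (by positivity)
    have heq : ((1200 / x 2) * (frob A * (5/2)) + frob A) * x 2 = 3000 * frob A + frob A * x 2 := by
      field_simp; ring
    have hKt : Kr A x * x 2 ≤ 3000 * frob A + frob A * x 2 := by
      rw [← heq]
      unfold Kr
      exact mul_le_mul_of_nonneg_right (add_le_add hstep le_rfl) hx2.le
    nlinarith [mul_le_of_le_one_right hF hx2']
  have h4 : ‖fderiv ℝ (vm A) x‖ ≤ 3001 * (frob A + 1) / x 2 := le_trans h2 h3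
  calc frob (matOf (fderiv ℝ (vm A) x)) ≤ 3 * ‖fderiv ℝ (vm A) x‖ := h1
  _ ≤ 3 * (3001 * (frob A + 1) / x 2) := by linarith
  _ = 9003 * (frob A + 1) / x 2 := by ring

def Uout : Set E3 := {y : E3 | 0 < y 2 ∧ y 2 / 100 < Metric.infDist y P1}

lemma isOpen_Uout : IsOpen Uout := by
  have h2 := contCoord 2
  exact (isOpen_lt continuous_const h2).inter
    (isOpen_lt (h2.div_const 100) (Metric.continuous_infDist_pt P1))

lemma vm_eq_A_on_Uout (A : Mat3) {y : E3} (hy : y ∈ Uout) : vm A y = Aclm A y := by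
  rw [Aclm_apply, vm, phi_one hy.1 hy.2.le, one_smul]

lemma fderiv_eq_A (A : Mat3) {x : E3} (hx : x ∈ Uout) :
    fderiv ℝ (vm A) x = Aclm A := by
  have hev : vm A =ᶠ[nhds x] ⇑(Aclm A) :=
    eventually_of_mem (isOpen_Uout.mem_nhds hx) (fun y hy => vm_eq_A_on_Uout A hy)
  rw [hev.fderiv_eq, ContinuousLinearMap.fderiv]

lemma fderiv_eq_zero (A : Mat3) {x : E3} (hx : x ∈ Pyr1 1) :
    fderiv ℝ (vm A) x = 0 := by
  have hev : vm A =ᶠ[nhds x] (fun _ => (0:E3)) :=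
    eventually_of_mem (isOpen_Pyr1.mem_nhds hx)
      (fun y hy => by rw [vm, phi_zero hy, zero_smul])
  rw [hev.fderiv_eq, fderiv_fun_const]
  rfl

lemma norm_le_two {x : E3} (hx : x ∈ Pyr2 1) (h1 : x 2 ≤ 1) : ‖x‖ ≤ 2 := by
  obtain ⟨ht, ht1, h0, hh1⟩ := hx
  have hb0 : |x 0| ≤ 1/2 := by rw [show ((1:ℝ)) = 1 from rfl] at ht1; linarith [abs_nonneg (x 0)]
  have hb1 : |x 1| ≤ 1/2 := by linarith [abs_nonneg (x 1)]
  have hb2 : |x 2| ≤ 1 := by rw [abs_of_pos ht]; exact h1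
  rw [EuclideanSpace.norm_eq]
  have : ∑ i, ‖x i‖^2 ≤ 4 := by
    rw [Fin.sum_univ_three]
    simp only [Real.norm_eq_abs]
    nlinarith [abs_nonneg (x 0), abs_nonneg (x 1), abs_nonneg (x 2)]
  calc Real.sqrt (∑ i, ‖x i‖^2) ≤ Real.sqrt 4 := Real.sqrt_le_sqrt this
  _ = 2 := by rw [show (4:ℝ) = 2^2 by norm_num, Real.sqrt_sq (by norm_num : (0:ℝ) ≤ 2)]

lemma exists_dyadic {t : ℝ} (h0 : 0 < t) (h1 : t ≤ 1) :
    ∃ k : ℕ, (2⁻¹:ℝ)^(k+1) ≤ t ∧ t ≤ (2⁻¹:ℝ)^k := by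
  classical
  have hex : ∃ n : ℕ, (2⁻¹:ℝ)^n < t := exists_pow_lt_of_lt_one h0 (by norm_num)
  have hn := Nat.find_spec hex
  have hn0 : Nat.find hex ≠ 0 := by
    intro h
    rw [h] at hn
    simp at hn
    linarith
  obtain ⟨k, hk⟩ := Nat.exists_eq_succ_of_ne_zero hn0
  refine ⟨k, ?_, ?_⟩
  · rw [← Nat.succ_eq_add_one, ← hk]; exact hn.le
  · have := Nat.find_min hex (m := k) (by omega)
    linarith [not_lt.mp this]

lemma volume_box (s : Fin 3 → Set ℝ) (hs : ∀ i, MeasurableSet (s i)) :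
    volume {x : E3 | ∀ i, x i ∈ s i} = ∏ i, volume (s i) := by
  have e := EuclideanSpace.volume_preserving_symm_measurableEquiv_toLp (Fin 3)
  have hset : {x : E3 | ∀ i, x i ∈ s i}
      = (MeasurableEquiv.toLp 2 (Fin 3 → ℝ)).symm ⁻¹' (Set.univ.pi s) := by
    ext x
    simp [Set.mem_pi]
  rw [hset, e.measure_preimage (MeasurableSet.univ_pi hs).nullMeasurableSet]
  exact volume_pi_pi s

def badSet : Set E3 :=
  ({x : E3 | 0 < x 2} ∩ {x : E3 | Metric.infDist x P1 ≤ x 2 / 100}) \ Pyr1 1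

lemma measurableSet_badSet : MeasurableSet badSet := by
  refine MeasurableSet.diff (MeasurableSet.inter ?_ ?_) isOpen_Pyr1.measurableSet
  · exact measurableSet_lt measurable_const (measurable_coord 2)
  · exact measurableSet_le (Metric.continuous_infDist_pt P1).measurable
      ((measurable_coord 2).div_const 100)

def slab (k : ℕ) : Set E3 := {x : E3 | (2⁻¹:ℝ)^(k+1) ≤ x 2 ∧ x 2 ≤ (2⁻¹:ℝ)^k}

lemma measurableSet_slab (k : ℕ) : MeasurableSet (slab k) :=
  (measurableSet_le measurable_const (measurable_coord 2)).inter
    (measurableSet_le (measurable_coord 2) measurable_const)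

lemma measurableSet_H3 : MeasurableSet H3 :=
  measurableSet_lt measurable_const (measurable_coord 2)

lemma measurableSet_Pyr2 : MeasurableSet (Pyr2 1) := by
  have h0 := measurable_coord 0
  have h1 := measurable_coord 1
  have h2 := measurable_coord 2
  exact (measurableSet_lt measurable_const h2).inter
    ((measurableSet_lt h2 measurable_const).inter
      ((measurableSet_lt h0.abs ((measurable_const.sub h2).div_const 2)).inter
        (measurableSet_lt h1.abs ((measurable_const.sub h2).div_const 2))))

lemma volume_box3 (u v w : Set ℝ) (hu : MeasurableSet u) (hv : MeasurableSet v)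
    (hw : MeasurableSet w) :
    volume {x : E3 | x 0 ∈ u ∧ x 1 ∈ v ∧ x 2 ∈ w} = volume u * volume v * volume w := by
  have hset : {x : E3 | x 0 ∈ u ∧ x 1 ∈ v ∧ x 2 ∈ w} = {x : E3 | ∀ i, x i ∈ (![u, v, w]) i} := by
    ext x
    simp only [Set.mem_setOf_eq]
    constructor
    · rintro ⟨h0, h1, h2⟩ i
      fin_cases i <;> simpa
    · intro h
      exact ⟨by simpa using h 0, by simpa using h 1, by simpa using h 2⟩
  rw [hset, volume_box _ (fun i => by fin_cases i <;> simpa), Fin.prod_univ_three]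
  simp

lemma vol_union_Icc {r1 r2 : ℝ} (h : r1 ≤ r2) :
    volume (Set.Icc (-r2) (-r1) ∪ Set.Icc r1 r2) ≤ ENNReal.ofReal (2*(r2 - r1)) := by
  refine le_trans (measure_union_le _ _) ?_
  rw [Real.volume_Icc, Real.volume_Icc, ← ENNReal.ofReal_add (by linarith) (by linarith)]
  apply ENNReal.ofReal_le_ofReal; linarith

lemma slab_vol (k : ℕ) : volume ((Pyr2 1 ∩ H3) ∩ badSet ∩ slab k)
    ≤ ENNReal.ofReal (6 * ((2⁻¹:ℝ)^(k+1))^2) := by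
  set τ : ℝ := (2⁻¹:ℝ)^(k+1) with hτdef
  have hτ : 0 < τ := by positivity
  have hτle : τ ≤ 1/2 := by
    rw [hτdef]
    calc (2⁻¹:ℝ)^(k+1) ≤ (2⁻¹:ℝ)^1 := by
          apply pow_le_pow_of_le_one (by norm_num) (by norm_num); omega
    _ = 1/2 := by norm_num
  have h2τ : (2⁻¹:ℝ)^k = 2*τ := by rw [hτdef, pow_succ]; ring
  set r1 : ℝ := 1/2 - 2*τ with hr1
  set r2 : ℝ := 1/2 - (24/25)*τ with hr2
  have hr2pos : 0 < r2 := by rw [hr2]; linarith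
  have hr12 : r1 ≤ r2 := by rw [hr1, hr2]; linarith
  set uA : Set ℝ := Set.Icc (-r2) (-r1) ∪ Set.Icc r1 r2 with huA
  set uB : Set ℝ := Set.Icc (-r2) r2 with huB
  set uC : Set ℝ := Set.Icc τ (2*τ) with huC
  have hmA : MeasurableSet uA := measurableSet_Icc.union measurableSet_Icc
  have hmB : MeasurableSet uB := measurableSet_Icc
  have hmC : MeasurableSet uC := measurableSet_Icc
  have hsub : (Pyr2 1 ∩ H3) ∩ badSet ∩ slab k ⊆
      {x : E3 | x 0 ∈ uA ∧ x 1 ∈ uB ∧ x 2 ∈ uC} ∪ {x : E3 | x 0 ∈ uB ∧ x 1 ∈ uA ∧ x 2 ∈ uC} := by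
    rintro x ⟨⟨⟨hP2, hH⟩, hb⟩, hsl⟩
    obtain ⟨⟨hbt, hbd⟩, hbnot⟩ := hb
    have ht : 0 < x 2 := hH
    have hsl1 : τ ≤ x 2 := hsl.1
    have hsl2 : x 2 ≤ 2*τ := by rw [← h2τ]; exact hsl.2
    have hclose := close_bound ht (lt_of_le_of_lt hbd (by linarith))
    have habs0 : |x 0| ≤ r2 := by rw [hr2]; linarith [hclose.2.1]
    have habs1 : |x 1| ≤ r2 := by rw [hr2]; linarith [hclose.2.2]
    have hmem : ∀ y : ℝ, r1 ≤ |y| → |y| ≤ r2 → y ∈ uA := by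
      intro y h1 h2
      rcases le_or_gt 0 y with hy|hy
      · right; rw [abs_of_nonneg hy] at h1 h2; exact ⟨h1, h2⟩
      · left; rw [abs_of_neg hy] at h1 h2; constructor <;> linarith
    have hC : x 2 ∈ uC := ⟨hsl1, hsl2⟩
    rcases not_mem_Pyr1_cases ht hbnot with hcase|hcase
    · exact Or.inl ⟨hmem _ (by rw [hr1]; linarith) habs0, abs_le.mp habs1, hC⟩
    · exact Or.inr ⟨abs_le.mp habs0, hmem _ (by rw [hr1]; linarith) habs1, hC⟩
  have hvA : volume uA ≤ ENNReal.ofReal (2*(r2 - r1)) := vol_union_Icc hr12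
  have hvB : volume uB = ENNReal.ofReal (2*r2) := by
    rw [huB, Real.volume_Icc]; congr 1; ring
  have hvC : volume uC = ENNReal.ofReal τ := by
    rw [huC, Real.volume_Icc]; congr 1; ring
  have key : ∀ (S : Set E3), volume S = volume uA * ENNReal.ofReal (2*r2) * ENNReal.ofReal τ →
      volume S ≤ ENNReal.ofReal (3*τ^2) := by
    intro S hS
    rw [hS]
    calc volume uA * ENNReal.ofReal (2*r2) * ENNReal.ofReal τ
        ≤ ENNReal.ofReal (2*(r2-r1)) * ENNReal.ofReal (2*r2) * ENNReal.ofReal τ := by gcongr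
    _ = ENNReal.ofReal (2*(r2-r1) * (2*r2) * τ) := by
        rw [← ENNReal.ofReal_mul (by linarith), ← ENNReal.ofReal_mul (by nlinarith [hr12, hr2pos])]
    _ ≤ ENNReal.ofReal (3*τ^2) := by
        apply ENNReal.ofReal_le_ofReal
        have hr2half : 2*r2 ≤ 1 := by rw [hr2]; linarith
        have hd : r2 - r1 = (26/25)*τ := by rw [hr1, hr2]; ring
        rw [hd]; nlinarith
  have hv0 : volume {x : E3 | x 0 ∈ uA ∧ x 1 ∈ uB ∧ x 2 ∈ uC} ≤ ENNReal.ofReal (3*τ^2) := by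
    apply key
    rw [volume_box3 _ _ _ hmA hmB hmC, hvB, hvC]
  have hv1 : volume {x : E3 | x 0 ∈ uB ∧ x 1 ∈ uA ∧ x 2 ∈ uC} ≤ ENNReal.ofReal (3*τ^2) := by
    rw [volume_box3 _ _ _ hmB hmA hmC, hvB, hvC]
    calc ENNReal.ofReal (2*r2) * volume uA * ENNReal.ofReal τ
        ≤ ENNReal.ofReal (2*r2) * ENNReal.ofReal (2*(r2-r1)) * ENNReal.ofReal τ := by gcongr
    _ = ENNReal.ofReal (2*r2 * (2*(r2-r1)) * τ) := by
        rw [← ENNReal.ofReal_mul (by linarith), ← ENNReal.ofReal_mul (by nlinarith [hr12, hr2pos])]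
    _ ≤ ENNReal.ofReal (3*τ^2) := by
        apply ENNReal.ofReal_le_ofReal
        have hr2half : 2*r2 ≤ 1 := by rw [hr2]; linarith
        have hd : r2 - r1 = (26/25)*τ := by rw [hr1, hr2]; ring
        rw [hd]; nlinarith
  calc volume ((Pyr2 1 ∩ H3) ∩ badSet ∩ slab k)
      ≤ volume ({x : E3 | x 0 ∈ uA ∧ x 1 ∈ uB ∧ x 2 ∈ uC}
          ∪ {x : E3 | x 0 ∈ uB ∧ x 1 ∈ uA ∧ x 2 ∈ uC}) := measure_mono hsub
  _ ≤ volume {x : E3 | x 0 ∈ uA ∧ x 1 ∈ uB ∧ x 2 ∈ uC}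
      + volume {x : E3 | x 0 ∈ uB ∧ x 1 ∈ uA ∧ x 2 ∈ uC} := measure_union_le _ _
  _ ≤ ENNReal.ofReal (3*τ^2) + ENNReal.ofReal (3*τ^2) := add_le_add hv0 hv1
  _ = ENNReal.ofReal (6*τ^2) := by
      rw [← ENNReal.ofReal_add (by positivity) (by positivity)]; ring_nf

end PyrAux

/-- for `1 < p < 2` there is an admissible map for the unit double-pyramid
problem with finite `p`-energy. -/
theorem pyramid_finite_energy (p : ℝ) (hp1 : 1 < p) (hp2 : p < 2) (A : Mat3) :
    ∃ v : E3 → E3, PyrAdm 1 A v ∧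
      (∫⁻ x in Pyr2 1 ∩ H3, ENNReal.ofReal (frob (matOf (fderiv ℝ v x)) ^ p)) < ⊤ := by
  classical
  have hp0 : (0:ℝ) < p := by linarith
  have hFn : (0:ℝ) ≤ frob A := PyrAux.frob_nonneg A
  have hCpos : (0:ℝ) < 9003 * (frob A + 1) := by linarith
  refine ⟨PyrAux.vm A, ⟨?_, ?_, ?_⟩, ?_⟩
  · -- locally Lipschitz
    intro x hx
    have ht : (0:ℝ) < x 2 := hx
    refine ⟨Real.toNNReal (PyrAux.Kr A x), Metric.ball x (x 2 / 2),
      Metric.ball_mem_nhds x (by linarith), ?_, PyrAux.lip A ht⟩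
    intro y hy
    have h2 := abs_lt.mp (lt_of_le_of_lt (PyrAux.abs_coord_sub_le y x 2) (Metric.mem_ball.mp hy))
    show (0:ℝ) < y 2
    linarith [h2.1]
  · -- vanishing on Pyr1
    rintro x ⟨hx1, _⟩
    rw [PyrAux.vm, PyrAux.phi_zero hx1, zero_smul]
  · -- equal to Ax outside Pyr2
    rintro x ⟨hxH, hxP⟩
    have ht : (0:ℝ) < x 2 := hxH
    have hd : x 2 / 100 ≤ Metric.infDist x PyrAux.P1 := by
      by_contra hlt
      push_neg at hlt
      exact hxP (PyrAux.mem_Pyr2_of_close ht (lt_of_lt_of_le hlt (by linarith)))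
    rw [PyrAux.vm, PyrAux.phi_one ht hd, one_smul]
  · -- finite energy
    set f : E3 → ℝ≥0∞ :=
      fun x => ENNReal.ofReal (frob (matOf (fderiv ℝ (PyrAux.vm A) x)) ^ p) with hfdef
    show (∫⁻ x in Pyr2 1 ∩ H3, f x) < ⊤
    have hsplit : ∫⁻ x in Pyr2 1 ∩ H3, f x ≤
        (∫⁻ x in (Pyr2 1 ∩ H3) \ PyrAux.badSet, f x)
          + ∫⁻ x in (Pyr2 1 ∩ H3) ∩ PyrAux.badSet, f x := by
      have hsub : Pyr2 1 ∩ H3 ⊆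
          ((Pyr2 1 ∩ H3) \ PyrAux.badSet) ∪ ((Pyr2 1 ∩ H3) ∩ PyrAux.badSet) := by
        intro x hx
        by_cases h : x ∈ PyrAux.badSet
        · exact Or.inr ⟨hx, h⟩
        · exact Or.inl ⟨hx, h⟩
      exact le_trans (lintegral_mono' (Measure.restrict_mono hsub le_rfl) le_rfl)
        (lintegral_union_le _ _ _)
    -- good part
    have hgood_pt : ∀ x ∈ (Pyr2 1 ∩ H3) \ PyrAux.badSet,
        f x ≤ ENNReal.ofReal ((frob A) ^ p) := by
      intro x hx
      obtain ⟨⟨hxP2, hxH⟩, hxb⟩ := hx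
      have ht : (0:ℝ) < x 2 := hxH
      by_cases hx1 : x ∈ Pyr1 1
      · show ENNReal.ofReal (frob (matOf (fderiv ℝ (PyrAux.vm A) x)) ^ p)
            ≤ ENNReal.ofReal ((frob A) ^ p)
        rw [PyrAux.fderiv_eq_zero A hx1, PyrAux.matOf_zero, PyrAux.frob_zero,
          Real.zero_rpow hp0.ne']
        simp
      · have hgt : x 2 / 100 < Metric.infDist x PyrAux.P1 := by
          by_contra hle
          push_neg at hle
          exact hxb ⟨⟨ht, hle⟩, hx1⟩
        show ENNReal.ofReal (frob (matOf (fderiv ℝ (PyrAux.vm A) x)) ^ p)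
            ≤ ENNReal.ofReal ((frob A) ^ p)
        rw [PyrAux.fderiv_eq_A A ⟨ht, hgt⟩, PyrAux.matOf_Aclm]
    have hgoodsub : (Pyr2 1 ∩ H3) \ PyrAux.badSet ⊆ Metric.ball (0:E3) 3 := by
      rintro x ⟨⟨hxP2, hxH⟩, _⟩
      rw [Metric.mem_ball, dist_zero_right]
      have := PyrAux.norm_le_two hxP2 (le_of_lt hxP2.2.1)
      linarith
    have hgoodmeas : MeasurableSet ((Pyr2 1 ∩ H3) \ PyrAux.badSet) :=
      (PyrAux.measurableSet_Pyr2.inter PyrAux.measurableSet_H3).diff PyrAux.measurableSet_badSet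
    have hgood : ∫⁻ x in (Pyr2 1 ∩ H3) \ PyrAux.badSet, f x
        ≤ ENNReal.ofReal ((frob A) ^ p) * volume (Metric.ball (0:E3) 3) := by
      calc ∫⁻ x in (Pyr2 1 ∩ H3) \ PyrAux.badSet, f x
          ≤ ∫⁻ _x in (Pyr2 1 ∩ H3) \ PyrAux.badSet, ENNReal.ofReal ((frob A) ^ p) :=
            setLIntegral_mono' hgoodmeas hgood_pt
      _ = ENNReal.ofReal ((frob A) ^ p) * volume ((Pyr2 1 ∩ H3) \ PyrAux.badSet) :=
            setLIntegral_const _ _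
      _ ≤ _ := mul_le_mul_right (measure_mono hgoodsub) _
    have hgoodfin : ENNReal.ofReal ((frob A) ^ p) * volume (Metric.ball (0:E3) 3) < ⊤ :=
      ENNReal.mul_lt_top ENNReal.ofReal_lt_top measure_ball_lt_top
    -- bad part
    have hbadsub : (Pyr2 1 ∩ H3) ∩ PyrAux.badSet ⊆
        ⋃ k : ℕ, ((Pyr2 1 ∩ H3) ∩ PyrAux.badSet) ∩ PyrAux.slab k := by
      intro x hx
      have ht : (0:ℝ) < x 2 := hx.1.2
      obtain ⟨k, hk1, hk2⟩ := PyrAux.exists_dyadic ht (le_of_lt hx.1.1.2.1)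
      exact Set.mem_iUnion.mpr ⟨k, hx, hk1, hk2⟩
    set q : ℝ≥0∞ := ENNReal.ofReal ((2⁻¹:ℝ) ^ ((2:ℝ) - p)) with hqdef
    have hq1 : q < 1 := by
      rw [hqdef]
      exact ENNReal.ofReal_lt_one.mpr (Real.rpow_lt_one (by norm_num) (by norm_num) (by linarith))
    have hkbound : ∀ k : ℕ, ∫⁻ x in ((Pyr2 1 ∩ H3) ∩ PyrAux.badSet) ∩ PyrAux.slab k, f x
        ≤ ENNReal.ofReal (6 * (9003 * (frob A + 1)) ^ p) * q ^ (k+1) := by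
      intro k
      have hτ : (0:ℝ) < (2⁻¹:ℝ)^(k+1) := by positivity
      have hmeask : MeasurableSet (((Pyr2 1 ∩ H3) ∩ PyrAux.badSet) ∩ PyrAux.slab k) :=
        ((PyrAux.measurableSet_Pyr2.inter PyrAux.measurableSet_H3).inter
          PyrAux.measurableSet_badSet).inter (PyrAux.measurableSet_slab k)
      have hpt : ∀ x ∈ ((Pyr2 1 ∩ H3) ∩ PyrAux.badSet) ∩ PyrAux.slab k,
          f x ≤ ENNReal.ofReal ((9003 * (frob A + 1) / (2⁻¹:ℝ)^(k+1)) ^ p) := by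
        intro x hx
        obtain ⟨⟨⟨hxP2, hxH⟩, hxb⟩, hxs⟩ := hx
        obtain ⟨hxs1, hxs2⟩ := hxs
        have ht : (0:ℝ) < x 2 := hxH
        have hb := PyrAux.bad_bound A ht (le_of_lt hxP2.2.1) hxb.1.2
          (PyrAux.norm_le_two hxP2 (le_of_lt hxP2.2.1))
        have hchain : frob (matOf (fderiv ℝ (PyrAux.vm A) x))
            ≤ 9003 * (frob A + 1) / (2⁻¹:ℝ)^(k+1) := by
          refine le_trans hb ?_
          gcongr
        exact ENNReal.ofReal_le_ofReal
          (Real.rpow_le_rpow (PyrAux.frob_nonneg _) hchain hp0.le)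
      calc ∫⁻ x in ((Pyr2 1 ∩ H3) ∩ PyrAux.badSet) ∩ PyrAux.slab k, f x
          ≤ ∫⁻ _x in ((Pyr2 1 ∩ H3) ∩ PyrAux.badSet) ∩ PyrAux.slab k,
              ENNReal.ofReal ((9003 * (frob A + 1) / (2⁻¹:ℝ)^(k+1)) ^ p) :=
            setLIntegral_mono' hmeask hpt
      _ = ENNReal.ofReal ((9003 * (frob A + 1) / (2⁻¹:ℝ)^(k+1)) ^ p)
            * volume (((Pyr2 1 ∩ H3) ∩ PyrAux.badSet) ∩ PyrAux.slab k) :=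
            setLIntegral_const _ _
      _ ≤ ENNReal.ofReal ((9003 * (frob A + 1) / (2⁻¹:ℝ)^(k+1)) ^ p)
            * ENNReal.ofReal (6 * ((2⁻¹:ℝ)^(k+1))^2) :=
            mul_le_mul_right (PyrAux.slab_vol k) _
      _ = ENNReal.ofReal (6 * (9003 * (frob A + 1)) ^ p) * q ^ (k+1) := by
            rw [← ENNReal.ofReal_mul (by positivity), hqdef,
              ← ENNReal.ofReal_pow (by positivity), ← ENNReal.ofReal_mul (by positivity)]
            congr 1
            have e4 : ((2⁻¹:ℝ)^(k+1)) ^ ((2:ℝ) - p) = ((2⁻¹:ℝ) ^ ((2:ℝ)-p))^(k+1) := by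
              rw [← Real.rpow_natCast (2⁻¹:ℝ) (k+1), ← Real.rpow_mul (by norm_num),
                mul_comm, Real.rpow_mul (by norm_num), Real.rpow_natCast]
            rw [← e4, Real.rpow_sub hτ, Real.rpow_two, Real.div_rpow hCpos.le hτ.le]
            have hτp : (0:ℝ) < ((2⁻¹:ℝ)^(k+1)) ^ p := Real.rpow_pos_of_pos hτ p
            field_simp
    have hbad : ∫⁻ x in (Pyr2 1 ∩ H3) ∩ PyrAux.badSet, f x
        ≤ ENNReal.ofReal (6 * (9003 * (frob A + 1)) ^ p) * (q * (1 - q)⁻¹) := by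
      calc ∫⁻ x in (Pyr2 1 ∩ H3) ∩ PyrAux.badSet, f x
          ≤ ∫⁻ x in ⋃ k : ℕ, ((Pyr2 1 ∩ H3) ∩ PyrAux.badSet) ∩ PyrAux.slab k, f x :=
            lintegral_mono' (Measure.restrict_mono hbadsub le_rfl) le_rfl
      _ ≤ ∑' k : ℕ, ∫⁻ x in ((Pyr2 1 ∩ H3) ∩ PyrAux.badSet) ∩ PyrAux.slab k, f x :=
            lintegral_iUnion_le _ _
      _ ≤ ∑' k : ℕ, ENNReal.ofReal (6 * (9003 * (frob A + 1)) ^ p) * q ^ (k+1) :=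
            ENNReal.tsum_le_tsum hkbound
      _ = ENNReal.ofReal (6 * (9003 * (frob A + 1)) ^ p) * ∑' k : ℕ, q ^ (k+1) :=
            ENNReal.tsum_mul_left
      _ = ENNReal.ofReal (6 * (9003 * (frob A + 1)) ^ p) * (q * (1 - q)⁻¹) := by
            rw [ENNReal.tsum_geometric_add_one]
    have hbadfin : ENNReal.ofReal (6 * (9003 * (frob A + 1)) ^ p) * (q * (1 - q)⁻¹) < ⊤ := by
      refine ENNReal.mul_lt_top ENNReal.ofReal_lt_top ?_
      refine ENNReal.mul_lt_top (lt_of_lt_of_le hq1 le_top) ?_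
      exact ENNReal.inv_lt_top.mpr (tsub_pos_of_lt hq1)
    exact lt_of_le_of_lt hsplit
      (ENNReal.add_lt_top.mpr ⟨lt_of_le_of_lt hgood hgoodfin, lt_of_le_of_lt hbad hbadfin⟩)
end
end

section
/- Let 1 < p < 2 and A ∈ ℝ^{3×3} with A ≠ 0. With C¹_1 and C²_1 the open pyramids with common base square (−1/2,1/2)² × {0} and apexes (0,0,1/2) and (0,0,1) respectively, and ℝ³₊ = {x ∈ ℝ³ : x₃ > 0}, the infimum m_{1,p,A} := inf { ∫_{C²_1 ∩ ℝ³₊} ‖Dv(x)‖^p dx : v : ℝ³₊ → ℝ³ locally Lipschitz, v = 0 on C¹_1 ∩ ℝ³₊, v(x) = Ax on ℝ³₊ ∖ C²_1 } is strictly positive. -/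
open MeasureTheory Filter Set Matrix
open scoped ENNReal NNReal Topology InnerProductSpace

noncomputable section

/-! ### Auxiliary definitions -/

/-- Standard basis vectors of `E3`. -/
def E0 : E3 := EuclideanSpace.single 0 1
def E1 : E3 := EuclideanSpace.single 1 1
def E2v : E3 := EuclideanSpace.single 2 1

/-- The vertical line through `(w 0, w 1, 0)`. -/
def lw (w : Fin 2 → ℝ) (t : ℝ) : E3 := (w 0) • E0 + (w 1) • E1 + t • E2v

/-- Norm of the derivative of `v` in the vertical direction. -/
def hvec (v : E3 → E3) (x : E3) : ℝ := ‖fderiv ℝ v x E2v‖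

/-- The set of points of `H3` where `v` is not differentiable. -/
def ND (v : E3 → E3) : Set E3 := {x | x ∈ H3 ∧ ¬ DifferentiableAt ℝ v x}

def PFS : (Fin 3 → ℝ) ≃ᵐ ℝ × (Fin 2 → ℝ) := MeasurableEquiv.piFinSuccAbove (fun _ : Fin 3 => ℝ) 2
def PhiE : E3 ≃ᵐ (Fin 3 → ℝ) := (MeasurableEquiv.toLp 2 (Fin 3 → ℝ)).symm
def Psi : (ℝ × (Fin 2 → ℝ)) ≃ᵐ E3 := (PFS.symm).trans PhiE.symm

/-! ### Coordinate lemmas -/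

lemma lw_app0 (w : Fin 2 → ℝ) (t : ℝ) : lw w t 0 = w 0 := by
  simp [lw, E0, E1, E2v, EuclideanSpace.single_apply, PiLp.add_apply, PiLp.smul_apply]
lemma lw_app1 (w : Fin 2 → ℝ) (t : ℝ) : lw w t 1 = w 1 := by
  simp [lw, E0, E1, E2v, EuclideanSpace.single_apply, PiLp.add_apply, PiLp.smul_apply]
lemma lw_app2 (w : Fin 2 → ℝ) (t : ℝ) : lw w t 2 = t := by
  simp [lw, E0, E1, E2v, EuclideanSpace.single_apply, PiLp.add_apply, PiLp.smul_apply]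

lemma norm_E2v : ‖E2v‖ = 1 := by simp [E2v]

lemma lw_sub (w : Fin 2 → ℝ) (s t : ℝ) : lw w s - lw w t = (s - t) • E2v := by
  simp only [lw, sub_smul]; abel

lemma dist_lw (w : Fin 2 → ℝ) (s t : ℝ) : dist (lw w s) (lw w t) = |s - t| := by
  rw [dist_eq_norm, lw_sub, norm_smul, norm_E2v, mul_one, Real.norm_eq_abs]

lemma lw_lipschitz (w : Fin 2 → ℝ) : LipschitzWith 1 (lw w) := by
  refine LipschitzWith.of_dist_le_mul fun s t => ?_
  rw [dist_lw, Real.dist_eq, NNReal.coe_one, one_mul]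

lemma col_le_frob (f : E3 →L[ℝ] E3) : ‖f E2v‖ ≤ frob (matOf f) := by
  rw [EuclideanSpace.norm_eq]
  apply Real.sqrt_le_sqrt
  calc ∑ i, ‖f E2v i‖ ^ 2 = ∑ i : Fin 3, (matOf f i 2)^2 := by
        refine Finset.sum_congr rfl fun i _ => ?_
        rw [Real.norm_eq_abs, sq_abs]; rfl
    _ ≤ ∑ i, ∑ j, (matOf f i j)^2 := by
        refine Finset.sum_le_sum fun i _ => ?_
        exact Finset.single_le_sum (f := fun j => (matOf f i j)^2)
          (fun j _ => sq_nonneg _) (Finset.mem_univ 2)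

lemma mulVecE_lw (A : Mat3) (w : Fin 2 → ℝ) (s t : ℝ) :
    mulVecE A (lw w s) = mulVecE A (lw w t) + (s - t) • mulVecE A E2v := by
  have h : lw w s = lw w t + (s - t) • E2v := by
    have := lw_sub w s t
    rw [← this]; abel
  rw [h]
  show WithLp.toLp 2 (A.mulVec _) = _
  rw [WithLp.ofLp_add, WithLp.ofLp_smul, Matrix.mulVec_add, Matrix.mulVec_smul]
  rfl

lemma mulVecE_apply (A : Mat3) (x : E3) (i : Fin 3) :
    mulVecE A x i = A i 0 * x 0 + A i 1 * x 1 + A i 2 * x 2 := by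
  show A.mulVec x i = _
  rw [Matrix.mulVec]
  show dotProduct (A i) x = _
  rw [dotProduct, Fin.sum_univ_three]

def mulVecL (A : Mat3) : E3 →ₗ[ℝ] E3 where
  toFun := mulVecE A
  map_add' x y := congrArg (WithLp.toLp 2) (Matrix.mulVec_add A x y)
  map_smul' r x := congrArg (WithLp.toLp 2) (Matrix.mulVec_smul A r x)

lemma mulVecE_cont (A : Mat3) : Continuous (mulVecE A) :=
  (mulVecL A).continuous_of_finiteDimensional

lemma surf_cont (A : Mat3) :
    Continuous fun w : Fin 2 → ℝ => ‖mulVecE A (lw w (1 - 2 * w 0))‖ := by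
  apply Continuous.norm
  apply (mulVecE_cont A).comp
  apply Continuous.add
  apply Continuous.add
  · exact (continuous_apply 0).smul continuous_const
  · exact (continuous_apply 1).smul continuous_const
  · exact (continuous_const.sub (continuous_const.mul (continuous_apply 0))).smul continuous_const

lemma measurable_coord (i : Fin 3) : Measurable fun x : E3 => x i := by measurability

lemma measurableSet_H3 : MeasurableSet H3 :=
  measurableSet_lt measurable_const (measurable_coord 2)

lemma hvec_meas (v : E3 → E3) : Measurable (hvec v) := by
  have h1 : Continuous fun L : E3 →L[ℝ] E3 => ‖L E2v‖ :=
    (ContinuousLinearMap.apply ℝ E3 E2v).continuous.norm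
  exact h1.measurable.comp (measurable_fderiv ℝ v)

/-! ### Measure-preserving identification -/

lemma hPsi : MeasurePreserving Psi := by
  have h1 := (volume_preserving_piFinSuccAbove (fun _ : Fin 3 => ℝ) 2).symm
  have h2 := (EuclideanSpace.volume_preserving_symm_measurableEquiv_toLp (Fin 3)).symm
  exact h2.comp h1

lemma Psi_eq_lw (t : ℝ) (w : Fin 2 → ℝ) : Psi (t, w) = lw w t := by
  have hval : Psi (t, w) = (Fin.insertNth 2 t w : Fin 3 → ℝ) := rfl
  have h0 : ((2:Fin 3).succAbove (0:Fin 2)) = (0:Fin 3) := rfl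
  have h1 : ((2:Fin 3).succAbove (1:Fin 2)) = (1:Fin 3) := rfl
  ext i
  fin_cases i
  · show Psi (t, w) 0 = lw w t 0
    rw [hval, lw_app0, ← h0, Fin.insertNth_apply_succAbove]
  · show Psi (t, w) 1 = lw w t 1
    rw [hval, lw_app1, ← h1, Fin.insertNth_apply_succAbove]
  · show Psi (t, w) 2 = lw w t 2
    rw [hval, lw_app2, Fin.insertNth_apply_same]

/-! ### A gluing lemma for locally Lipschitz functions on an interval -/

lemma lem_glue {β : Type*} [PseudoMetricSpace β] {g : ℝ → β} {c d : ℝ} (hcd : c ≤ d)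
    (hloc : ∀ t ∈ Icc c d, ∃ K : ℝ≥0, ∃ s ∈ 𝓝 t, LipschitzOnWith K g s) :
    ∃ K : ℝ≥0, LipschitzOnWith K g (Icc c d) := by
  set T : Set ℝ := {u | u ∈ Icc c d ∧ ∃ K : ℝ≥0, LipschitzOnWith K g (Icc c u)} with hT
  have hcT : c ∈ T := by
    refine ⟨⟨le_rfl, hcd⟩, 0, ?_⟩
    intro x hx y hy
    rw [Icc_self, mem_singleton_iff] at hx hy
    subst hx; subst hy; simp
  have hne : T.Nonempty := ⟨c, hcT⟩
  have hbdd : BddAbove T := ⟨d, fun u hu => hu.1.2⟩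
  set u₀ := sSup T with hu₀
  have hcu₀ : c ≤ u₀ := le_csSup hbdd hcT
  have hu₀d : u₀ ≤ d := csSup_le hne fun u hu => hu.1.2
  obtain ⟨K₂, s, hs, hlip₂⟩ := hloc u₀ ⟨hcu₀, hu₀d⟩
  obtain ⟨δ', hδ'pos, hball⟩ := Metric.mem_nhds_iff.1 hs
  set δ := δ' / 2 with hδ
  have hδpos : 0 < δ := by positivity
  have hIcc_s : Icc (u₀ - δ) (u₀ + δ) ⊆ s := by
    refine subset_trans (fun x hx => ?_) hball
    rw [Metric.mem_ball, Real.dist_eq, abs_sub_lt_iff]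
    constructor <;> [skip; skip] <;> cases' hx with h1 h2 <;> simp only [hδ] at * <;> linarith
  obtain ⟨u, huT, hu_gt⟩ := exists_lt_of_lt_csSup hne (by linarith : u₀ - δ < u₀)
  have huu₀ : u ≤ u₀ := le_csSup hbdd huT
  obtain ⟨⟨hcu, hud⟩, K₁, hlip₁⟩ := huT
  set e := min d (u₀ + δ) with he
  have heIcc : e ∈ Icc c d := ⟨le_min hcd (by linarith), min_le_left _ _⟩
  set K := max K₁ K₂ with hK
  have hlipe : LipschitzOnWith K g (Icc c e) := by
    rw [lipschitzOnWith_iff_dist_le_mul]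
    have key : ∀ x ∈ Icc c e, ∀ y ∈ Icc c e, x ≤ y → dist (g x) (g y) ≤ K * dist x y := by
      intro x hx y hy hxy
      have hdist : dist x y = y - x := by rw [Real.dist_eq, abs_sub_comm, abs_of_nonneg]; linarith
      have hK1 : (K₁ : ℝ) ≤ K := by exact_mod_cast le_max_left _ _
      have hK2 : (K₂ : ℝ) ≤ K := by exact_mod_cast le_max_right _ _
      have hye : y ≤ u₀ + δ := le_trans hy.2 (min_le_right _ _)
      rcases le_or_gt y u with hyu | huy
      · calc dist (g x) (g y) ≤ K₁ * dist x y :=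
              (lipschitzOnWith_iff_dist_le_mul.1 hlip₁) x ⟨hx.1, le_trans hxy hyu⟩ y ⟨hy.1, hyu⟩
          _ ≤ K * dist x y := by apply mul_le_mul_of_nonneg_right hK1 dist_nonneg
      rcases le_or_gt u x with hux | hxu
      · have hxs : x ∈ s := hIcc_s ⟨by linarith, by linarith⟩
        have hys : y ∈ s := hIcc_s ⟨by linarith, hye⟩
        calc dist (g x) (g y) ≤ K₂ * dist x y :=
              (lipschitzOnWith_iff_dist_le_mul.1 hlip₂) x hxs y hys
          _ ≤ K * dist x y := by apply mul_le_mul_of_nonneg_right hK2 dist_nonneg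
      · have hus : u ∈ s := hIcc_s ⟨by linarith, by linarith⟩
        have hys : y ∈ s := hIcc_s ⟨by linarith, hye⟩
        calc dist (g x) (g y) ≤ dist (g x) (g u) + dist (g u) (g y) := dist_triangle _ _ _
          _ ≤ K₁ * dist x u + K₂ * dist u y := by
              gcongr
              · exact (lipschitzOnWith_iff_dist_le_mul.1 hlip₁) x ⟨hx.1, le_of_lt hxu⟩ u
                  ⟨hcu, le_rfl⟩
              · exact (lipschitzOnWith_iff_dist_le_mul.1 hlip₂) u hus y hys
          _ ≤ K * dist x u + K * dist u y := by
              have := dist_nonneg (x := x) (y := u)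
              have := dist_nonneg (x := u) (y := y)
              nlinarith
          _ = K * (dist x u + dist u y) := by ring
          _ = K * dist x y := by
              rw [hdist, Real.dist_eq, Real.dist_eq, abs_sub_comm x u, abs_of_nonneg (by linarith),
                abs_sub_comm u y, abs_of_nonneg (by linarith)]
              ring_nf
    intro x hx y hy
    rcases le_total x y with h | h
    · exact key x hx y hy h
    · rw [dist_comm (g x), dist_comm x]; exact key y hy x hx h
  have heT : e ∈ T := ⟨heIcc, K, hlipe⟩
  have heu₀ : e ≤ u₀ := le_csSup hbdd heT
  have hdu₀ : d ≤ u₀ := by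
    by_contra hlt
    push_neg at hlt
    have : u₀ < e := lt_min hlt (by linarith)
    linarith
  have hud' : u₀ = d := le_antisymm hu₀d hdu₀
  have hed : e = d := by rw [he, hud']; exact min_eq_left (by linarith)
  exact ⟨K, hed ▸ hlipe⟩

/-! ### Fundamental inequality for monotone functions -/

lemma lem_mono_ftc {φ : ℝ → ℝ} {c d : ℝ} (hcd : c ≤ d) (hm : MonotoneOn φ (Icc c d)) :
    ∫⁻ t in Ioo c d, ENNReal.ofReal (deriv φ t) ≤ ENNReal.ofReal (φ d - φ c) := by
  set ψ : ℝ → ℝ := fun t => φ (max c (min d t)) with hψdef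
  have hmem : ∀ t : ℝ, max c (min d t) ∈ Icc c d :=
    fun t => ⟨le_max_left _ _, max_le hcd (min_le_left _ _)⟩
  have hψm : Monotone ψ := by
    intro a b hab
    exact hm (hmem a) (hmem b) (max_le_max le_rfl (min_le_min le_rfl hab))
  have hψeq : ∀ t ∈ Ioo c d, ψ =ᶠ[𝓝 t] φ := by
    intro t ht
    filter_upwards [Ioo_mem_nhds ht.1 ht.2] with s hs
    simp only [hψdef]
    rw [min_eq_right hs.2.le, max_eq_right hs.1.le]
  have hlb : ∀ t, φ c ≤ ψ t := fun t => hm ⟨le_rfl, hcd⟩ (hmem t) (le_max_left _ _)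
  have hub : ∀ t, ψ t ≤ φ d := fun t => hm (hmem t) ⟨hcd, le_rfl⟩ (max_le hcd (min_le_left _ _))
  set F : ℝ → ℝ≥0∞ := fun t => ENNReal.ofReal (ψ t - φ c) with hFdef
  have hFmeas : Measurable F :=
    ENNReal.measurable_ofReal.comp ((hψm.measurable).sub measurable_const)
  have hFmono : Monotone F := fun a b hab => ENNReal.ofReal_le_ofReal (by linarith [hψm hab])
  set C : ℝ≥0∞ := ENNReal.ofReal (φ d - φ c) with hCdef
  have hFle : ∀ t, F t ≤ C :=
    fun t => ENNReal.ofReal_le_ofReal (by linarith [hub t])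
  set q : ℕ → ℝ → ℝ≥0∞ :=
    fun n t => ENNReal.ofReal ((ψ (t + ((n : ℝ) + 1)⁻¹) - ψ t) * ((n : ℝ) + 1)) with hqdef
  have hqmeas : ∀ n, Measurable (q n) := by
    intro n
    exact ENNReal.measurable_ofReal.comp
      (((hψm.measurable.comp (measurable_id.add_const _)).sub hψm.measurable).mul measurable_const)
  have hpt : ∀ t ∈ Ioo c d, ENNReal.ofReal (deriv φ t) ≤ liminf (fun n => q n t) atTop := by
    intro t ht
    by_cases hd : DifferentiableAt ℝ φ t
    · have hψd : HasDerivAt ψ (deriv φ t) t :=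
        hd.hasDerivAt.congr_of_eventuallyEq (hψeq t ht)
      have hslope := hasDerivAt_iff_tendsto_slope.1 hψd
      have hseq : Tendsto (fun n : ℕ => t + ((n : ℝ) + 1)⁻¹) atTop (𝓝[≠] t) := by
        apply tendsto_nhdsWithin_of_tendsto_nhds_of_eventually_within
        · have : Tendsto (fun n : ℕ => ((n : ℝ) + 1)⁻¹) atTop (𝓝 0) :=
            tendsto_one_div_add_atTop_nhds_zero_nat.congr (by simp [one_div])
          simpa using (tendsto_const_nhds (x := t)).add this
        · filter_upwards with n
          have : (0:ℝ) < ((n : ℝ) + 1)⁻¹ := by positivity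
          simp only [mem_compl_iff, mem_singleton_iff]
          intro h
          nlinarith [h]
      have htend : Tendsto (fun n : ℕ => slope ψ t (t + ((n : ℝ) + 1)⁻¹)) atTop
          (𝓝 (deriv φ t)) := hslope.comp hseq
      have hq_eq : ∀ n : ℕ, q n t = ENNReal.ofReal (slope ψ t (t + ((n : ℝ) + 1)⁻¹)) := by
        intro n
        rw [hqdef]
        simp only [slope_def_field, add_sub_cancel_left]
        rw [div_inv_eq_mul]
      have : Tendsto (fun n => q n t) atTop (𝓝 (ENNReal.ofReal (deriv φ t))) := by
        simp_rw [hq_eq]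
        exact (ENNReal.continuous_ofReal.tendsto _).comp htend
      rw [this.liminf_eq]
    · rw [deriv_zero_of_not_differentiableAt hd]
      simp
  have hbound : ∀ n : ℕ, ∫⁻ t in Ioo c d, q n t ≤ C := by
    intro n
    set ε : ℝ := ((n : ℝ) + 1)⁻¹ with hεdef
    have hεpos : 0 < ε := by positivity
    have hq_eq : ∀ t, q n t = ENNReal.ofReal ((n : ℝ) + 1) * (F (t + ε) - F t) := by
      intro t
      have h1 : (ψ (t + ε) - ψ t) * ((n : ℝ) + 1)
          = ((n : ℝ) + 1) * ((ψ (t + ε) - φ c) - (ψ t - φ c)) := by ring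
      rw [hqdef]
      simp only [← hεdef, h1]
      rw [ENNReal.ofReal_mul (by positivity), ENNReal.ofReal_sub _ (by linarith [hlb t])]
    have hInt_le : ∫⁻ t in Ioo c d, F t ≤ C * ENNReal.ofReal (d - c) := by
      calc ∫⁻ t in Ioo c d, F t ≤ ∫⁻ _ in Ioo c d, C := lintegral_mono fun t => hFle t
        _ = C * volume (Ioo c d) := by rw [setLIntegral_const]
        _ = C * ENNReal.ofReal (d - c) := by rw [Real.volume_Ioo]
    have hInt_ne : ∫⁻ t in Ioo c d, F t ≠ ⊤ :=
      ne_top_of_le_ne_top (by finiteness) hInt_le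
    have htrans : ∫⁻ t in Ioo c d, F (t + ε) = ∫⁻ t in Ioo (c + ε) (d + ε), F t := by
      have hpre : (fun t : ℝ => t + ε) ⁻¹' (Ioo (c + ε) (d + ε)) = Ioo c d := by
        ext t; simp only [mem_preimage, mem_Ioo]; constructor <;> intro h <;>
          exact ⟨by linarith [h.1], by linarith [h.2]⟩
      rw [← hpre,
        (measurePreserving_add_right volume ε).setLIntegral_comp_preimage_emb
          (measurableEmbedding_addRight ε)]
    have hsplit : ∫⁻ t in Ioo (c + ε) (d + ε), F t
        ≤ (∫⁻ t in Ioo c d, F t) + C * ENNReal.ofReal ε := by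
      have hsub : Ioo (c + ε) (d + ε) ⊆ Ioo c d ∪ Ico d (d + ε) := by
        intro t ht
        rcases lt_or_ge t d with h | h
        · exact Or.inl ⟨by linarith [ht.1], h⟩
        · exact Or.inr ⟨h, ht.2⟩
      calc ∫⁻ t in Ioo (c + ε) (d + ε), F t ≤ ∫⁻ t in Ioo c d ∪ Ico d (d + ε), F t :=
            lintegral_mono_set hsub
        _ ≤ (∫⁻ t in Ioo c d, F t) + ∫⁻ t in Ico d (d + ε), F t := lintegral_union_le _ _ _
        _ ≤ (∫⁻ t in Ioo c d, F t) + C * ENNReal.ofReal ε := by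
            gcongr
            calc ∫⁻ t in Ico d (d + ε), F t ≤ ∫⁻ _ in Ico d (d + ε), C :=
                  lintegral_mono fun t => hFle t
              _ = C * volume (Ico d (d + ε)) := by rw [setLIntegral_const]
              _ = C * ENNReal.ofReal ε := by rw [Real.volume_Ico]; ring_nf
    calc ∫⁻ t in Ioo c d, q n t
        = ENNReal.ofReal ((n : ℝ) + 1) * ∫⁻ t in Ioo c d, (F (t + ε) - F t) := by
          simp_rw [hq_eq]
          have hfm : Measurable fun t : ℝ => F (t + ε) - F t :=
            (hFmeas.comp (measurable_id.add_const ε)).sub hFmeas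
          rw [lintegral_const_mul _ hfm]
      _ = ENNReal.ofReal ((n : ℝ) + 1)
            * ((∫⁻ t in Ioo c d, F (t + ε)) - ∫⁻ t in Ioo c d, F t) := by
          rw [lintegral_sub hFmeas hInt_ne (ae_of_all _ fun t => hFmono (by linarith))]
      _ ≤ ENNReal.ofReal ((n : ℝ) + 1) * (C * ENNReal.ofReal ε) := by
          gcongr
          rw [htrans]
          exact tsub_le_iff_right.2 (le_trans hsplit (le_of_eq (add_comm _ _)))
      _ = (ENNReal.ofReal ((n : ℝ) + 1) * ENNReal.ofReal ε) * C := by ring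
      _ = C := by
          rw [← ENNReal.ofReal_mul (by positivity), hεdef,
            mul_inv_cancel₀ (by positivity : ((n:ℝ) + 1) ≠ 0)]
          simp
  calc ∫⁻ t in Ioo c d, ENNReal.ofReal (deriv φ t)
      ≤ ∫⁻ t in Ioo c d, liminf (fun n => q n t) atTop := by
        refine lintegral_mono_ae ((ae_restrict_iff' measurableSet_Ioo).2 (ae_of_all _ hpt))
    _ ≤ liminf (fun n => ∫⁻ t in Ioo c d, q n t) atTop := lintegral_liminf_le hqmeas
    _ ≤ C := by
        refine liminf_le_of_frequently_le ?_
        exact Frequently.of_forall hbound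

/-! ### Rademacher for locally Lipschitz maps -/

lemma lem_rade {v : E3 → E3} (hv : LocLipOn H3 v) :
    ∀ᵐ x, x ∈ H3 → DifferentiableAt ℝ v x := by
  choose K s hs hsub hlip using hv
  classical
  set f : E3 → Set E3 := fun x => if hx : x ∈ H3 then interior (s x hx) else univ with hfdef
  have hf' : ∀ x ∈ H3, f x ∈ 𝓝[H3] x := by
    intro x hx
    simp only [hfdef, dif_pos hx]
    exact mem_nhdsWithin_of_mem_nhds (interior_mem_nhds.2 (hs x hx))
  obtain ⟨T, hTsub, hTc, hTcover⟩ := TopologicalSpace.countable_cover_nhdsWithin hf'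
  have key : ∀ x₀ ∈ T, ∀ᵐ y, y ∈ f x₀ → DifferentiableAt ℝ v y := by
    intro x₀ hx₀
    have hx₀H : x₀ ∈ H3 := hTsub hx₀
    have hlip' : LipschitzOnWith (K x₀ hx₀H) v (interior (s x₀ hx₀H)) :=
      (hlip x₀ hx₀H).mono interior_subset
    filter_upwards [hlip'.ae_differentiableWithinAt_of_mem] with y hy hyf
    simp only [hfdef, dif_pos hx₀H] at hyf
    exact (hy hyf).differentiableAt (isOpen_interior.mem_nhds hyf)
  have hT := (ae_ball_iff hTc).2 key
  filter_upwards [hT] with y hy hyH3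
  obtain ⟨x₀, hx₀T, hyf⟩ := by simpa using hTcover hyH3
  exact hy x₀ hx₀T hyf

/-! ### The per-line estimate -/

lemma lem_line {v : E3 → E3} {A : Mat3} (hv : LocLipOn H3 v)
    (h1 : ∀ x ∈ Pyr1 1 ∩ H3, v x = 0) (h2 : ∀ x ∈ H3 \ Pyr2 1, v x = mulVecE A x)
    {w : Fin 2 → ℝ} (hw0l : 1/8 < w 0) (hw0r : w 0 < 1/4) (hw1 : |w 1| < 1/8)
    (hnull : volume {t : ℝ | lw w t ∈ ND v} = 0) :
    ENNReal.ofReal ‖mulVecE A (lw w (1 - 2 * w 0))‖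
      ≤ ∫⁻ t in Ioo (1/8 : ℝ) (1 - 2 * w 0), ENNReal.ofReal (hvec v (lw w t)) := by
  set c : ℝ := 1/8 with hcdef
  set d : ℝ := 1 - 2 * w 0 with hddef
  clear_value c d
  have hd1 : 1/2 < d := by rw [hddef]; linarith
  have hd2 : d < 3/4 := by rw [hddef]; linarith
  have hcd : c ≤ d := by rw [hcdef]; linarith
  set g : ℝ → E3 := fun t => v (lw w t) with hgdef
  have hloc : ∀ t ∈ Icc c d, ∃ K : ℝ≥0, ∃ s ∈ 𝓝 t, LipschitzOnWith K g s := by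
    intro t ht
    have hH : lw w t ∈ H3 := by
      show 0 < lw w t 2
      rw [lw_app2]
      have := ht.1; rw [hcdef] at this; linarith
    obtain ⟨K, s, hs, _, hlip⟩ := hv _ hH
    refine ⟨K * 1, (lw w) ⁻¹' s,
      ((lw_lipschitz w).continuous.continuousAt).preimage_mem_nhds hs, ?_⟩
    have hinner : LipschitzOnWith 1 (lw w) ((lw w) ⁻¹' s) := fun x _ y _ => lw_lipschitz w x y
    exact hlip.comp hinner (mapsTo_preimage _ _)
  obtain ⟨K, hK⟩ := lem_glue hcd hloc
  have hKd := lipschitzOnWith_iff_dist_le_mul.1 hK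
  have habs0 : |w 0| < 3/8 := abs_lt.2 ⟨by linarith, by linarith⟩
  have hgc : g c = 0 := by
    apply h1
    refine ⟨?_, ?_⟩
    · show 0 < lw w c 2 ∧ lw w c 2 < 1/2 ∧ |lw w c 0| < 1/2 - lw w c 2 ∧ |lw w c 1| < 1/2 - lw w c 2
      rw [lw_app0, lw_app1, lw_app2, hcdef]
      norm_num
      exact ⟨by linarith [habs0], by linarith [hw1]⟩
    · show 0 < lw w c 2
      rw [lw_app2, hcdef]; norm_num
  have hout : ∀ t, d < t → v (lw w t) = mulVecE A (lw w t) := by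
    intro t htd
    apply h2
    constructor
    · show 0 < lw w t 2
      rw [lw_app2]; linarith
    · intro hmem
      obtain ⟨_, _, h0, _⟩ := hmem
      rw [lw_app0, lw_app2] at h0
      have := (abs_lt.1 h0).2
      rw [hddef] at htd
      linarith
  have hgd : g d = mulVecE A (lw w d) := by
    have hH : lw w d ∈ H3 := by show 0 < lw w d 2; rw [lw_app2]; linarith
    obtain ⟨K', s, hs, _, hlip⟩ := hv _ hH
    have hcont : ContinuousAt v (lw w d) := hlip.continuousOn.continuousAt hs
    have hcg : ContinuousAt g d := hcont.comp ((lw_lipschitz w).continuous.continuousAt)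
    have l1 : Tendsto g (𝓝[>] d) (𝓝 (g d)) := hcg.tendsto.mono_left nhdsWithin_le_nhds
    set F : ℝ → E3 := fun t => mulVecE A (lw w d) + (t - d) • mulVecE A E2v with hFdef
    have hFcont : Continuous F := by
      apply continuous_const.add
      exact (continuous_id.sub continuous_const).smul continuous_const
    have hFd : F d = mulVecE A (lw w d) := by simp [hFdef]
    have l2 : Tendsto g (𝓝[>] d) (𝓝 (mulVecE A (lw w d))) := by
      rw [← hFd]
      refine Tendsto.congr' ?_ (hFcont.continuousAt.tendsto.mono_left nhdsWithin_le_nhds)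
      filter_upwards [self_mem_nhdsWithin] with t ht
      rw [hFdef]
      simp only
      rw [← mulVecE_lw A w t d]
      exact (hout t ht).symm
    exact tendsto_nhds_unique l1 l2
  set M : E3 := mulVecE A (lw w d) with hMdef
  by_cases hM : M = 0
  · rw [hM]
    simp
  set u : E3 := (‖M‖⁻¹ : ℝ) • M with hudef
  have hnu : ‖u‖ = 1 := norm_smul_inv_norm hM
  set f : ℝ → ℝ := fun t => ⟪g t, u⟫_ℝ with hfdef
  have hfc : f c = 0 := by simp [hfdef, hgc]
  have hfd : f d = ‖M‖ := by
    rw [hfdef]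
    simp only [hgd, ← hMdef, hudef]
    rw [real_inner_smul_right, real_inner_self_eq_norm_sq]
    have : ‖M‖ ≠ 0 := by simpa using hM
    field_simp
  set φ : ℝ → ℝ := fun t => (K : ℝ) * t - f t with hφdef
  have hφm : MonotoneOn φ (Icc c d) := by
    intro a ha b hb hab
    have hfab : f b - f a ≤ (K : ℝ) * (b - a) := by
      have he : f b - f a = ⟪g b - g a, u⟫_ℝ := by rw [inner_sub_left]
      calc f b - f a ≤ ‖g b - g a‖ * ‖u‖ := he ▸ real_inner_le_norm _ _
        _ = dist (g b) (g a) := by rw [hnu, mul_one, dist_eq_norm]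
        _ ≤ (K : ℝ) * dist b a := hKd b hb a ha
        _ = (K : ℝ) * (b - a) := by
            rw [Real.dist_eq, abs_of_nonneg (by linarith)]
    simp only [hφdef]
    linarith
  have hae : ∀ᵐ t ∂(volume.restrict (Ioo c d)), DifferentiableAt ℝ v (lw w t) := by
    rw [ae_restrict_iff' measurableSet_Ioo]
    rw [ae_iff]
    refine measure_mono_null ?_ hnull
    intro t ht
    simp only [mem_setOf_eq] at ht
    push_neg at ht
    refine ⟨?_, ht.2⟩
    show 0 < lw w t 2
    rw [lw_app2]
    have := ht.1.1; rw [hcdef] at this; linarith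
  have hkey : ∀ᵐ t ∂(volume.restrict (Ioo c d)),
      ENNReal.ofReal ((K : ℝ) - hvec v (lw w t)) ≤ ENNReal.ofReal (deriv φ t)
        ∧ hvec v (lw w t) ≤ (K : ℝ) := by
    filter_upwards [hae, ae_restrict_mem measurableSet_Ioo] with t hdiff htI
    have hlwd : HasDerivAt (lw w) E2v t := by
      have h1 : HasDerivAt (fun r : ℝ => r • E2v) ((1:ℝ) • E2v) t :=
        (hasDerivAt_id t).smul_const E2v
      have h2 := h1.const_add ((w 0) • E0 + (w 1) • E1)
      have : lw w = fun x : ℝ => (w 0) • E0 + (w 1) • E1 + x • E2v := rfl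
      rw [this]
      simpa [one_smul] using h2
    have hgd' : HasDerivAt g (fderiv ℝ v (lw w t) E2v) t :=
      (hdiff.hasFDerivAt).comp_hasDerivAt t hlwd
    have hfd' : HasDerivAt f (⟪fderiv ℝ v (lw w t) E2v, u⟫_ℝ) t := by
      have := HasDerivAt.inner ℝ hgd' (hasDerivAt_const t u)
      simpa using this
    have hφd : HasDerivAt φ ((K : ℝ) - ⟪fderiv ℝ v (lw w t) E2v, u⟫_ℝ) t := by
      have hid : HasDerivAt (fun r : ℝ => (K : ℝ) * r) (K : ℝ) t := by
        simpa using (hasDerivAt_id t).const_mul (K : ℝ)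
      exact hid.sub hfd'
    have hderiveq : deriv φ t = (K : ℝ) - ⟪fderiv ℝ v (lw w t) E2v, u⟫_ℝ := hφd.deriv
    constructor
    · rw [hderiveq]
      apply ENNReal.ofReal_le_ofReal
      have h := real_inner_le_norm (fderiv ℝ v (lw w t) E2v) u
      rw [hnu, mul_one] at h
      simp only [hvec]
      linarith
    · have hsl := (hasDerivAt_iff_tendsto_slope.1 hgd').norm
      have hev : ∀ᶠ s in 𝓝[≠] t, ‖slope g t s‖ ≤ (K : ℝ) := by
        have hIoo : Ioo c d ∈ 𝓝 t := Ioo_mem_nhds htI.1 htI.2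
        filter_upwards [mem_nhdsWithin_of_mem_nhds hIoo, self_mem_nhdsWithin] with s hsI hst
        have hst' : s ≠ t := hst
        have habs : (0:ℝ) < |s - t| := by
          rw [abs_pos, sub_ne_zero]; exact hst'
        rw [slope]
        rw [norm_smul, norm_inv, Real.norm_eq_abs]
        have hb := hKd s ⟨hsI.1.le, hsI.2.le⟩ t ⟨htI.1.le, htI.2.le⟩
        rw [dist_eq_norm, Real.dist_eq] at hb
        calc |s - t|⁻¹ * ‖g s - g t‖ ≤ |s - t|⁻¹ * ((K : ℝ) * |s - t|) := by
              apply mul_le_mul_of_nonneg_left hb (by positivity)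
          _ = (K : ℝ) := by field_simp
      exact le_of_tendsto hsl hev
  have hφcd : ‖M‖ ≤ (K : ℝ) * (d - c) := by
    have := hφm ⟨le_rfl, hcd⟩ ⟨hcd, le_rfl⟩ hcd
    simp only [hφdef, hfc, hfd] at this
    linarith
  have hftc := lem_mono_ftc hcd hφm
  have hφdc : φ d - φ c = (K : ℝ) * (d - c) - ‖M‖ := by
    simp only [hφdef, hfc, hfd]; ring
  rw [hφdc] at hftc
  have hmeas_h : Measurable fun t : ℝ => ENNReal.ofReal (hvec v (lw w t)) := by
    apply ENNReal.measurable_ofReal.comp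
    exact (hvec_meas v).comp (lw_lipschitz w).continuous.measurable
  have hmeas_h2 : Measurable fun t : ℝ => ENNReal.ofReal ((K : ℝ) - hvec v (lw w t)) := by
    apply ENNReal.measurable_ofReal.comp
    apply Measurable.sub measurable_const
    exact (hvec_meas v).comp (lw_lipschitz w).continuous.measurable
  have hIK : ∫⁻ _ in Ioo c d, ENNReal.ofReal ((K : ℝ)) = ENNReal.ofReal ((K:ℝ) * (d - c)) := by
    rw [setLIntegral_const, Real.volume_Ioo, ← ENNReal.ofReal_mul (by positivity)]
  have hsplit : ∫⁻ t in Ioo c d, ENNReal.ofReal ((K : ℝ))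
      = (∫⁻ t in Ioo c d, ENNReal.ofReal ((K : ℝ) - hvec v (lw w t)))
        + ∫⁻ t in Ioo c d, ENNReal.ofReal (hvec v (lw w t)) := by
    rw [← lintegral_add_left hmeas_h2]
    refine lintegral_congr_ae ?_
    filter_upwards [hkey] with t ht
    have hnn : (0:ℝ) ≤ hvec v (lw w t) := norm_nonneg _
    have e := ENNReal.ofReal_add (p := (K:ℝ) - hvec v (lw w t)) (q := hvec v (lw w t))
      (by linarith [ht.2]) hnn
    rw [← e]
    congr 1
    ring
  have hle1 : ∫⁻ t in Ioo c d, ENNReal.ofReal ((K : ℝ) - hvec v (lw w t))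
      ≤ ENNReal.ofReal ((K:ℝ) * (d - c) - ‖M‖) := by
    refine le_trans (lintegral_mono_ae (hkey.mono fun t ht => ht.1)) hftc
  set B : ℝ≥0∞ := ENNReal.ofReal ((K:ℝ) * (d - c) - ‖M‖) with hBdef
  have hBne : B ≠ ⊤ := ENNReal.ofReal_ne_top
  have hsum2 : ENNReal.ofReal ‖M‖ + B = ENNReal.ofReal ((K:ℝ) * (d - c)) := by
    rw [hBdef, ← ENNReal.ofReal_add (norm_nonneg _) (by linarith)]
    ring_nf
  have hchain : ENNReal.ofReal ‖M‖ + B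
      ≤ (∫⁻ t in Ioo c d, ENNReal.ofReal (hvec v (lw w t))) + B := by
    rw [hsum2, ← hIK, hsplit]
    rw [add_comm]
    exact add_le_add le_rfl hle1
  exact (ENNReal.add_le_add_iff_right hBne).1 hchain

/-! ### From an `L¹` lower bound to an `Lᵖ` lower bound -/

lemma lem_pow {p : ℝ} (hp : 1 ≤ p) {S : Set ℝ} (hS : volume S ≤ 1) {h : ℝ → ℝ}
    (hh : ∀ t, 0 ≤ h t) {ε : ℝ} (hε : 0 < ε)
    (hint : ENNReal.ofReal ε ≤ ∫⁻ t in S, ENNReal.ofReal (h t)) :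
    ENNReal.ofReal ((ε/2)^p) ≤ ∫⁻ t in S, ENNReal.ofReal (h t ^ p) := by
  set μ : ℝ := ε / 2 with hμdef
  have hμ : 0 < μ := by positivity
  have hpt : ∀ t, h t ≤ μ + μ ^ (1 - p) * h t ^ p := by
    intro t
    rcases le_or_gt (h t) μ with hle | hlt
    · have : 0 ≤ μ ^ (1 - p) * h t ^ p := by
        apply mul_nonneg (Real.rpow_nonneg hμ.le _) (Real.rpow_nonneg (hh t) _)
      linarith
    · have hht : 0 < h t := lt_trans hμ hlt
      have h1 : μ ^ (p - 1) * h t ≤ h t ^ (p - 1) * h t := by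
        apply mul_le_mul_of_nonneg_right _ hht.le
        exact Real.rpow_le_rpow hμ.le hlt.le (by linarith)
      have h2 : h t ^ (p - 1) * h t = h t ^ p := by
        nth_rewrite 2 [← Real.rpow_one (h t)]
        rw [← Real.rpow_add hht]
        ring_nf
      have h3 : μ ^ (1 - p) * (μ ^ (p - 1) * h t) = h t := by
        rw [← mul_assoc, ← Real.rpow_add hμ]
        norm_num
      calc h t = μ ^ (1 - p) * (μ ^ (p - 1) * h t) := h3.symm
        _ ≤ μ ^ (1 - p) * (h t ^ (p - 1) * h t) := by
            apply mul_le_mul_of_nonneg_left h1 (Real.rpow_nonneg hμ.le _)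
        _ = μ ^ (1 - p) * h t ^ p := by rw [h2]
        _ ≤ μ + μ ^ (1 - p) * h t ^ p := by
            linarith [Real.rpow_nonneg hμ.le (1-p), Real.rpow_nonneg (hh t) p,
              mul_nonneg (Real.rpow_nonneg hμ.le (1-p)) (Real.rpow_nonneg (hh t) p)]
  have hintle : ENNReal.ofReal ε ≤ ENNReal.ofReal μ
      + ENNReal.ofReal (μ ^ (1 - p)) * ∫⁻ t in S, ENNReal.ofReal (h t ^ p) := by
    calc ENNReal.ofReal ε ≤ ∫⁻ t in S, ENNReal.ofReal (h t) := hint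
      _ ≤ ∫⁻ t in S,
            (ENNReal.ofReal μ + ENNReal.ofReal (μ ^ (1 - p)) * ENNReal.ofReal (h t ^ p)) := by
          apply lintegral_mono fun t => ?_
          rw [← ENNReal.ofReal_mul (Real.rpow_nonneg hμ.le _)]
          rw [← ENNReal.ofReal_add hμ.le
            (mul_nonneg (Real.rpow_nonneg hμ.le _) (Real.rpow_nonneg (hh t) _))]
          exact ENNReal.ofReal_le_ofReal (hpt t)
      _ = ENNReal.ofReal μ * volume S
          + ENNReal.ofReal (μ ^ (1 - p)) * ∫⁻ t in S, ENNReal.ofReal (h t ^ p) := by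
          rw [lintegral_add_left measurable_const, setLIntegral_const,
            lintegral_const_mul' _ _ ENNReal.ofReal_ne_top]
      _ ≤ ENNReal.ofReal μ + ENNReal.ofReal (μ ^ (1 - p)) * ∫⁻ t in S, ENNReal.ofReal (h t ^ p) := by
          gcongr
          calc ENNReal.ofReal μ * volume S ≤ ENNReal.ofReal μ * 1 := by gcongr
            _ = ENNReal.ofReal μ := mul_one _
  have hcancel : ENNReal.ofReal μ
      ≤ ENNReal.ofReal (μ ^ (1 - p)) * ∫⁻ t in S, ENNReal.ofReal (h t ^ p) := by
    have hεμ : ENNReal.ofReal ε = ENNReal.ofReal μ + ENNReal.ofReal μ := by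
      rw [← ENNReal.ofReal_add hμ.le hμ.le, hμdef]; ring_nf
    rw [hεμ] at hintle
    exact (ENNReal.add_le_add_iff_left ENNReal.ofReal_ne_top).1 hintle
  have hkey : ENNReal.ofReal (μ ^ (1 - p)) * ENNReal.ofReal (μ ^ p)
      ≤ ENNReal.ofReal (μ ^ (1 - p)) * ∫⁻ t in S, ENNReal.ofReal (h t ^ p) := by
    calc ENNReal.ofReal (μ ^ (1 - p)) * ENNReal.ofReal (μ ^ p)
        = ENNReal.ofReal (μ ^ (1 - p) * μ ^ p) :=
          (ENNReal.ofReal_mul (Real.rpow_nonneg hμ.le _)).symm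
      _ = ENNReal.ofReal μ := by rw [← Real.rpow_add hμ]; norm_num
      _ ≤ _ := hcancel
  have hne0 : ENNReal.ofReal (μ ^ (1 - p)) ≠ 0 := by
    simp only [ne_eq, ENNReal.ofReal_eq_zero, not_le]
    exact Real.rpow_pos_of_pos hμ _
  exact (ENNReal.mul_le_mul_iff_right hne0 ENNReal.ofReal_ne_top).1 hkey

/-! ### Nondegeneracy of `A` on the lateral surface -/

lemma exists_good_w {A : Mat3} (hA : A ≠ 0) :
    ∃ w : Fin 2 → ℝ, (1/8 < w 0 ∧ w 0 < 1/4 ∧ |w 1| < 1/8) ∧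
      mulVecE A (lw w (1 - 2 * w 0)) ≠ 0 := by
  by_contra hcon
  push_neg at hcon
  apply hA
  have key : ∀ (a b : ℝ), 1/8 < a → a < 1/4 → |b| < 1/8 →
      ∀ i, A i 0 * a + A i 1 * b + A i 2 * (1 - 2*a) = 0 := by
    intro a b ha1 ha2 hb i
    set w : Fin 2 → ℝ := ![a, b] with hw
    have hw0 : w 0 = a := rfl
    have hw1 : w 1 = b := rfl
    have := hcon w ⟨by rw [hw0]; exact ha1, by rw [hw0]; exact ha2, by rw [hw1]; exact hb⟩
    have hi : mulVecE A (lw w (1 - 2 * w 0)) i = 0 := by rw [this]; rfl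
    rw [mulVecE_apply, lw_app0, lw_app1, lw_app2, hw0, hw1] at hi
    linarith [hi]
  ext i j
  have e1 := key (3/16) 0 (by norm_num) (by norm_num) (by norm_num) i
  have e2 := key (7/32) 0 (by norm_num) (by norm_num) (by norm_num) i
  have e3 := key (3/16) (1/16) (by norm_num) (by norm_num)
    (by rw [abs_of_nonneg]; norm_num; norm_num) i
  have hA0 : A i 0 = 0 := by linarith
  have hA2 : A i 2 = 0 := by linarith
  have hA1 : A i 1 = 0 := by linarith
  fin_cases j <;> simp [hA0, hA1, hA2]

/-! ### Main theorem -/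

set_option maxHeartbeats 2000000 in
/-- for `1 < p < 2` and `A ≠ 0`, the unit double-pyramid minimum `m_{1,p,A}`
is strictly positive. -/
theorem pyramid_positive (p : ℝ) (hp1 : 1 < p) (hp2 : p < 2) (A : Mat3) (hA : A ≠ 0) :
    0 < mPyr 1 p A := by
  classical
  -- choose a good point and a box around it
  obtain ⟨w₀, ⟨hw₀1, hw₀2, hw₀3⟩, hw₀M⟩ := exists_good_w hA
  set ρ : (Fin 2 → ℝ) → ℝ := fun w => ‖mulVecE A (lw w (1 - 2 * w 0))‖ with hρdef
  have hρcont : Continuous ρ := surf_cont A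
  have hρ0 : 0 < ρ w₀ := norm_pos_iff.2 hw₀M
  set ε : ℝ := ρ w₀ / 2 with hεdef
  have hε : 0 < ε := by positivity
  obtain ⟨δ, hδpos, hδ⟩ := Metric.continuousAt_iff.1 hρcont.continuousAt ε hε
  have hρw : ∀ w : Fin 2 → ℝ, dist w w₀ < δ → ε ≤ ρ w := by
    intro w hw
    have h := hδ hw
    rw [Real.dist_eq] at h
    have h2 := (abs_lt.1 h).1
    rw [hεdef] at *
    linarith
  set r : ℝ := min δ (min (w₀ 0 - 1/8) (min (1/4 - w₀ 0) (1/8 - |w₀ 1|))) with hrdef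
  have hr1 : r ≤ δ := min_le_left _ _
  have hr2 : r ≤ w₀ 0 - 1/8 := le_trans (min_le_right _ _) (min_le_left _ _)
  have hr3 : r ≤ 1/4 - w₀ 0 :=
    le_trans (min_le_right _ _) (le_trans (min_le_right _ _) (min_le_left _ _))
  have hr4 : r ≤ 1/8 - |w₀ 1| :=
    le_trans (min_le_right _ _) (le_trans (min_le_right _ _) (min_le_right _ _))
  have hrpos : 0 < r := by
    rw [hrdef]
    refine lt_min hδpos (lt_min (by linarith) (lt_min (by linarith) (by linarith)))
  set Box : Set (Fin 2 → ℝ) := univ.pi fun i => Ioo (w₀ i - r/2) (w₀ i + r/2) with hBoxdef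
  have hBoxmeas : MeasurableSet Box := MeasurableSet.univ_pi fun i => measurableSet_Ioo
  have hBoxvol : volume Box = ENNReal.ofReal r * ENNReal.ofReal r := by
    rw [hBoxdef, volume_pi_pi]
    have : ∀ i : Fin 2, volume (Ioo (w₀ i - r/2) (w₀ i + r/2)) = ENNReal.ofReal r := by
      intro i; rw [Real.volume_Ioo]; congr 1; ring
    rw [Fin.prod_univ_two, this 0, this 1]
  have hBoxmem : ∀ w ∈ Box, (1/8 < w 0 ∧ w 0 < 1/4 ∧ |w 1| < 1/8) ∧ ε ≤ ρ w := by
    intro w hw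
    have h0 := hw 0 (mem_univ _)
    have h1 := hw 1 (mem_univ _)
    simp only [mem_Ioo] at h0 h1
    have hb1 : |w 1| < 1/8 := by
      have : |w 1 - w₀ 1| < r/2 := abs_lt.2 ⟨by linarith [h1.1], by linarith [h1.2]⟩
      calc |w 1| = |w₀ 1 + (w 1 - w₀ 1)| := by ring_nf
        _ ≤ |w₀ 1| + |w 1 - w₀ 1| := abs_add_le _ _
        _ < |w₀ 1| + r/2 := by linarith
        _ < 1/8 := by linarith
    refine ⟨⟨by linarith [h0.1], by linarith [h0.2], hb1⟩, ?_⟩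
    apply hρw
    rw [dist_pi_lt_iff hδpos]
    intro i
    fin_cases i
    · rw [Real.dist_eq]
      have : |w 0 - w₀ 0| < r/2 := abs_lt.2 ⟨by linarith [h0.1], by linarith [h0.2]⟩
      calc |w 0 - w₀ 0| < r/2 := this
        _ < δ := by linarith
    · rw [Real.dist_eq]
      have : |w 1 - w₀ 1| < r/2 := abs_lt.2 ⟨by linarith [h1.1], by linarith [h1.2]⟩
      calc |w 1 - w₀ 1| < r/2 := this
        _ < δ := by linarith
  set c₀ : ℝ≥0∞ := ENNReal.ofReal ((ε/2)^p) * volume Box with hc₀def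
  have hc₀pos : 0 < c₀ := by
    rw [hc₀def, hBoxvol]
    have h1 : ENNReal.ofReal ((ε/2)^p) ≠ 0 := by
      simp only [ne_eq, ENNReal.ofReal_eq_zero, not_le]
      exact Real.rpow_pos_of_pos (by positivity) _
    have h2 : ENNReal.ofReal r ≠ 0 := by
      simp only [ne_eq, ENNReal.ofReal_eq_zero, not_le]
      exact hrpos
    rw [pos_iff_ne_zero]
    exact mul_ne_zero h1 (mul_ne_zero h2 h2)
  refine lt_of_lt_of_le hc₀pos (le_sInf ?_)
  rintro e ⟨v, ⟨hv, h1, h2⟩, rfl⟩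
  -- the nondifferentiability set is null
  have hNDmeas : MeasurableSet (ND v) :=
    measurableSet_H3.inter (measurableSet_of_differentiableAt ℝ v).compl
  have hND0 : volume (ND v) = 0 := by
    have hae := lem_rade hv
    rw [ae_iff] at hae
    refine measure_mono_null ?_ hae
    intro x hx
    simp only [mem_setOf_eq]
    exact fun him => hx.2 (him hx.1)
  -- Fubini: almost every vertical line misses ND v in a null set
  set N' : Set (ℝ × (Fin 2 → ℝ)) := Psi ⁻¹' (ND v) with hN'def
  have hN'meas : MeasurableSet N' := Psi.measurable hNDmeas
  have hN'0 : volume N' = 0 := by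
    rw [hN'def, hPsi.measure_preimage hNDmeas.nullMeasurableSet, hND0]
  set N'' : Set ((Fin 2 → ℝ) × ℝ) := Prod.swap ⁻¹' N' with hN''def
  have hN''meas : MeasurableSet N'' := measurable_swap hN'meas
  have hsw : MeasurePreserving (Prod.swap : (Fin 2 → ℝ) × ℝ → ℝ × (Fin 2 → ℝ))
      ((volume : Measure (Fin 2 → ℝ)).prod (volume : Measure ℝ))
      ((volume : Measure ℝ).prod (volume : Measure (Fin 2 → ℝ))) :=
    Measure.measurePreserving_swap
  have hN''0 : ((volume : Measure (Fin 2 → ℝ)).prod (volume : Measure ℝ)) N'' = 0 := by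
    rw [hN''def, hsw.measure_preimage hN'meas.nullMeasurableSet, ← Measure.volume_eq_prod, hN'0]
  have hslice := (Measure.measure_prod_null hN''meas).1 hN''0
  have hslice' : ∀ᵐ w : Fin 2 → ℝ, volume {t : ℝ | lw w t ∈ ND v} = 0 := by
    filter_upwards [hslice] with w hw
    have hseteq : Prod.mk w ⁻¹' N'' = {t : ℝ | lw w t ∈ ND v} := by
      ext t
      simp only [hN''def, hN'def, mem_preimage, Prod.swap_prod_mk, mem_setOf_eq, Psi_eq_lw]
    rw [← hseteq]
    exact hw
  -- the integrand and its lower bound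
  set f3 : E3 → ℝ≥0∞ := fun x => ENNReal.ofReal (hvec v x ^ p) with hf3def
  have hf3meas : Measurable f3 :=
    ENNReal.measurable_ofReal.comp
      ((Real.continuous_rpow_const (by linarith : (0:ℝ) ≤ p)).measurable.comp (hvec_meas v))
  set TB : Set (ℝ × (Fin 2 → ℝ)) :=
    {z | z.2 ∈ Box ∧ z.1 ∈ Ioo (1/8 : ℝ) (1 - 2 * z.2 0)} with hTBdef
  have hTBmeas : MeasurableSet TB := by
    apply MeasurableSet.inter
    · exact measurable_snd hBoxmeas
    apply MeasurableSet.inter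
    · exact measurableSet_lt measurable_const measurable_fst
    · exact measurableSet_lt measurable_fst
        (measurable_const.sub (((measurable_pi_apply 0).comp measurable_snd).const_mul 2))
  set RB : Set E3 := Psi '' TB with hRBdef
  have hRBmeas : MeasurableSet RB := Psi.measurableEmbedding.measurableSet_image.2 hTBmeas
  have hRBsub : RB ⊆ Pyr2 1 ∩ H3 := by
    rintro x ⟨⟨t, w⟩, ⟨hwB, htI⟩, rfl⟩
    obtain ⟨⟨hb1, hb2, hb3⟩, -⟩ := hBoxmem w hwB
    simp only [mem_Ioo] at htI
    rw [Psi_eq_lw]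
    have habs : |lw w t 0| = w 0 := by rw [lw_app0]; exact abs_of_pos (by linarith)
    constructor
    · refine ⟨?_, ?_, ?_, ?_⟩
      · rw [lw_app2]; linarith [htI.1]
      · rw [lw_app2]; linarith [htI.2]
      · rw [habs, lw_app2]; linarith [htI.2]
      · rw [lw_app1, lw_app2]
        have : w 0 < (1 - t)/2 := by linarith [htI.2]
        linarith
    · show 0 < lw w t 2
      rw [lw_app2]; linarith [htI.1]
  -- inner lower bound (a.e. in w)
  have hinner : ∀ᵐ w : Fin 2 → ℝ,
      Box.indicator (fun _ => ENNReal.ofReal ((ε/2)^p)) w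
        ≤ ∫⁻ t : ℝ, TB.indicator (fun z => f3 (Psi z)) (t, w) := by
    filter_upwards [hslice'] with w hwnull
    by_cases hwB : w ∈ Box
    · rw [indicator_of_mem hwB]
      obtain ⟨⟨hb1, hb2, hb3⟩, hbε⟩ := hBoxmem w hwB
      have heq : ∀ t : ℝ, TB.indicator (fun z => f3 (Psi z)) (t, w)
          = (Ioo (1/8:ℝ) (1 - 2 * w 0)).indicator
              (fun t => ENNReal.ofReal (hvec v (lw w t) ^ p)) t := by
        intro t
        by_cases ht : t ∈ Ioo (1/8:ℝ) (1 - 2 * w 0)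
        · rw [indicator_of_mem (show ((t, w) : ℝ × (Fin 2 → ℝ)) ∈ TB from ⟨hwB, ht⟩),
            indicator_of_mem ht]
          simp only [hf3def, Psi_eq_lw]
        · rw [indicator_of_notMem (fun hmem => ht hmem.2), indicator_of_notMem ht]
      calc ENNReal.ofReal ((ε/2)^p)
          ≤ ∫⁻ t in Ioo (1/8:ℝ) (1 - 2 * w 0), ENNReal.ofReal (hvec v (lw w t) ^ p) := by
            refine lem_pow hp1.le ?_ (fun t => norm_nonneg _) hε ?_
            · rw [Real.volume_Ioo]
              exact ENNReal.ofReal_le_one.2 (by linarith)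
            · refine le_trans (ENNReal.ofReal_le_ofReal hbε) ?_
              exact lem_line hv h1 h2 hb1 hb2 hb3 hwnull
        _ = ∫⁻ t : ℝ, TB.indicator (fun z => f3 (Psi z)) (t, w) := by
            rw [← lintegral_indicator measurableSet_Ioo]
            exact lintegral_congr fun t => (heq t).symm
      -- done with the in-Box case (note first step above is an identity)
    · rw [indicator_of_notMem hwB]
      exact zero_le
  -- put everything together
  have hTBind_meas : Measurable fun z : ℝ × (Fin 2 → ℝ) => TB.indicator (fun z => f3 (Psi z)) z :=
    (hf3meas.comp Psi.measurable).indicator hTBmeas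
  have hmain : c₀ ≤ ∫⁻ x in Pyr2 1 ∩ H3, ENNReal.ofReal (frob (matOf (fderiv ℝ v x)) ^ p) := by
    calc c₀ = ∫⁻ w : Fin 2 → ℝ, Box.indicator (fun _ => ENNReal.ofReal ((ε/2)^p)) w := by
          rw [lintegral_indicator_const hBoxmeas, hc₀def]
      _ ≤ ∫⁻ w : Fin 2 → ℝ, ∫⁻ t : ℝ, TB.indicator (fun z => f3 (Psi z)) (t, w) :=
          lintegral_mono_ae hinner
      _ = ∫⁻ z : ℝ × (Fin 2 → ℝ), TB.indicator (fun z => f3 (Psi z)) z := by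
          rw [Measure.volume_eq_prod]
          exact (lintegral_prod_symm' _ hTBind_meas).symm
      _ = ∫⁻ z : ℝ × (Fin 2 → ℝ), RB.indicator f3 (Psi z) := by
          refine lintegral_congr fun z => ?_
          by_cases hz : z ∈ TB
          · rw [indicator_of_mem hz, indicator_of_mem (mem_image_of_mem _ hz)]
          · rw [indicator_of_notMem hz, indicator_of_notMem ?_]
            intro hmem
            obtain ⟨a, ha, hae⟩ := hmem
            exact hz (Psi.injective hae ▸ ha)
      _ = ∫⁻ x : E3, RB.indicator f3 x := hPsi.lintegral_comp (hf3meas.indicator hRBmeas)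
      _ = ∫⁻ x in RB, f3 x := lintegral_indicator hRBmeas _
      _ ≤ ∫⁻ x in Pyr2 1 ∩ H3, f3 x := lintegral_mono_set hRBsub
      _ ≤ ∫⁻ x in Pyr2 1 ∩ H3, ENNReal.ofReal (frob (matOf (fderiv ℝ v x)) ^ p) := by
          refine lintegral_mono fun x => ?_
          refine ENNReal.ofReal_le_ofReal ?_
          exact Real.rpow_le_rpow (norm_nonneg _) (col_le_frob _) (by linarith)
  exact hmain

end
end
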